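/- arXiv:1805.09225 — 5 statements merged into one kernel-verified Lean document; each statement's English description precedes it below -/
import Mathlib

section
/- Let f(t), g(t) ∈ ℤ[t] be distinct non-constant polynomials with positive leading coefficients such that f(1) = g(1) ≠ 0, and let d be the largest integer such that t^d divides f(t) − g(t). Then for every sufficiently large prime p, the congruence G_{f(p)} ≡ G_{g(p)} (mod p^{d+1}) holds coefficientwise in ℚ[[q]]. -/
open scoped BigOperators

noncomputable def sigmaQ (k : ℕ) (n : ℕ) : ℚ := ∑ d ∈ n.divisors, (d : ℚ) ^ k

/-- Serre's normalized Eisenstein series G_k (with the convention G_k = 0 for bad k). -/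
noncomputable def G (k : ℤ) : PowerSeries ℚ :=
  if 4 ≤ k ∧ Even k then
    PowerSeries.mk fun n =>
      if n = 0 then -(bernoulli k.toNat) / (2 * (k : ℚ)) else sigmaQ (k.toNat - 1) n
  else 0

/-- `F ≡ H (mod p^N)` coefficientwise: all coefficients are p-integral and every
coefficient of the difference has p-adic valuation at least N. -/
def SCongr (p N : ℕ) (F H : PowerSeries ℚ) : Prop :=
  (∀ n, padicNorm p (PowerSeries.coeff n F) ≤ 1) ∧
  (∀ n, padicNorm p (PowerSeries.coeff n H) ≤ 1) ∧
  ∀ n, padicNorm p (PowerSeries.coeff n (F - H)) ≤ (p : ℚ) ^ (-(N : ℤ))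


open Finset

section Helpers

set_option linter.unusedSectionVars false

variable {p : ℕ} [hp : Fact p.Prime]

private lemma qp_pos : (0:ℚ) < (p:ℚ) := by exact_mod_cast hp.out.pos

private lemma qp_one_lt : (1:ℚ) < (p:ℚ) := by exact_mod_cast hp.out.one_lt

private lemma qp_ne : (p:ℚ) ≠ 0 := ne_of_gt qp_pos

private lemma zpow_le_p {a b : ℤ} (h : a ≤ b) : (p:ℚ)^a ≤ (p:ℚ)^b :=
  zpow_le_zpow_right₀ (le_of_lt qp_one_lt) h

private lemma zpow_pos_p (a : ℤ) : (0:ℚ) < (p:ℚ)^a := zpow_pos qp_pos a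

private lemma padicNorm_nat_eq (j : ℕ) (hj : j ≠ 0) :
    padicNorm p (j:ℚ) = (p:ℚ) ^ (-(padicValNat p j : ℤ)) := by
  rw [padicNorm.eq_zpow_of_nonzero (by exact_mod_cast hj), padicValRat.of_nat]

private lemma padicNorm_ppow (t : ℕ) : padicNorm p ((p:ℚ)^t) = (p:ℚ) ^ (-(t:ℤ)) := by
  have h : ((p:ℚ))^t = ((p^t : ℕ) : ℚ) := by push_cast; ring
  rw [h, padicNorm_nat_eq _ (pow_ne_zero t hp.out.ne_zero), padicValNat.prime_pow]

private lemma padicValNat_le (j : ℕ) (hj : j ≠ 0) : (padicValNat p j : ℤ) ≤ (j:ℤ) - 1 := by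
  have h2 : p ^ padicValNat p j ≤ j :=
    Nat.le_of_dvd (Nat.pos_of_ne_zero hj) pow_padicValNat_dvd
  have h3 : padicValNat p j < p ^ padicValNat p j := Nat.lt_pow_self hp.out.one_lt
  have h4 := lt_of_lt_of_le h3 h2
  omega

/-- `‖p^(M j)/j‖ ≤ p^(-Mj + j - 1)`. -/
private lemma norm_ppow_div (M j : ℕ) (hj : j ≠ 0) :
    padicNorm p ((p:ℚ)^(M*j) / (j:ℚ)) ≤ (p:ℚ)^(-((M:ℤ)*j) + (j:ℤ) - 1) := by
  rw [padicNorm.div, padicNorm_ppow, padicNorm_nat_eq j hj,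
    div_eq_mul_inv, ← zpow_neg, ← zpow_add₀ qp_ne]
  apply zpow_le_p
  have h1 := padicValNat_le (p := p) j hj
  have h2 : ((M*j : ℕ):ℤ) = (M:ℤ)*(j:ℤ) := by push_cast; ring
  rw [h2]
  linarith

private lemma pnorm_mul_le {x y : ℚ} {a b : ℚ} (hx : padicNorm p x ≤ a) (hy : padicNorm p y ≤ b)
    (hb : 0 ≤ b) : padicNorm p (x*y) ≤ a * b := by
  rw [padicNorm.mul]
  exact mul_le_mul hx hy (padicNorm.nonneg y) (le_trans (padicNorm.nonneg x) hx)

/-- Weak von Staudt–Clausen: `‖B_K‖_p ≤ p`. -/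
lemma bernoulli_padicNorm_le (K : ℕ) : padicNorm p (bernoulli K) ≤ (p:ℚ) := by
  induction K using Nat.strong_induction_on with
  | _ K ih =>
  have faul := sum_range_pow p K
  rw [Finset.sum_range_succ, Nat.choose_succ_self_right] at faul
  have hK1 : ((K:ℚ) + 1) ≠ 0 := by positivity
  have hlast : bernoulli K * (↑(K + 1)) * (p:ℚ) ^ (K + 1 - K) / ((K:ℚ) + 1) = bernoulli K * p := by
    have h : K + 1 - K = 1 := by omega
    rw [h, pow_one]
    push_cast
    field_simp
  rw [hlast] at faul
  have key : bernoulli K * (p:ℚ) = (∑ x ∈ range p, (x:ℚ)^K) -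
      ∑ i ∈ range K, bernoulli i * ((K+1).choose i) * (p:ℚ)^(K+1-i) / ((K:ℚ)+1) := by
    rw [faul]; ring
  have h1 : padicNorm p (bernoulli K * (p:ℚ)) ≤ 1 := by
    rw [key]
    refine le_trans padicNorm.sub (max_le ?_ ?_)
    · have h : (∑ x ∈ range p, (x:ℚ)^K) = ((∑ x ∈ range p, x^K : ℕ) : ℚ) := by push_cast; ring
      rw [h]; exact padicNorm.of_nat _
    · refine padicNorm.sum_le' (fun i hi => ?_) zero_le_one
      have hiK : i < K := Finset.mem_range.mp hi
      set j := K + 1 - i with hjdef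
      have hj0 : j ≠ 0 := by omega
      have hjQ : ((j:ℚ)) ≠ 0 := by exact_mod_cast hj0
      have hq : ((K.choose i : ℚ)) * ((K:ℚ)+1) = ((K+1).choose i : ℚ) * (j:ℚ) := by
        have h := Nat.choose_mul_succ_eq K i
        exact_mod_cast congrArg (fun x : ℕ => (x:ℚ)) h
      have hterm : bernoulli i * ((K+1).choose i) * (p:ℚ)^j / ((K:ℚ)+1)
          = bernoulli i * (K.choose i) * ((p:ℚ)^(1*j) / (j : ℚ)) := by
        rw [one_mul]
        field_simp
        linear_combination (-(bernoulli i * (p:ℚ)^j)) * hq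
      rw [hterm]
      have h3 : padicNorm p ((p:ℚ)^(1*j) / (j : ℚ)) ≤ (p:ℚ)⁻¹ := by
        refine le_trans (norm_ppow_div 1 j hj0) ?_
        rw [← zpow_neg_one]
        apply zpow_le_p
        push_cast
        linarith
      calc padicNorm p (bernoulli i * (K.choose i) * ((p:ℚ)^(1*j) / (j : ℚ)))
          ≤ ((p:ℚ) * 1) * (p:ℚ)⁻¹ := by
            refine pnorm_mul_le (pnorm_mul_le (ih i hiK) (padicNorm.of_nat _) zero_le_one) h3 ?_
            positivity
        _ = 1 := by rw [mul_one, mul_inv_cancel₀ qp_ne]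
  have h2 : padicNorm p (bernoulli K * (p:ℚ)) = padicNorm p (bernoulli K) * (p:ℚ)⁻¹ := by
    rw [padicNorm.mul, padicNorm.padicNorm_p_of_prime]
  rw [h2] at h1
  calc padicNorm p (bernoulli K) = padicNorm p (bernoulli K) * (p:ℚ)⁻¹ * p := by rw [mul_assoc, inv_mul_cancel₀ qp_ne, mul_one]
    _ ≤ 1 * p := mul_le_mul_of_nonneg_right h1 (le_of_lt qp_pos)
    _ = p := one_mul _

end Helpers
section Part2

set_option linter.unusedSectionVars false

variable {p : ℕ} [hp : Fact p.Prime]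

private lemma sq_dvd_aux (x y : ℤ) : ∀ k : ℕ, x^2 ∣ (x+y)^(k+1) - y^(k+1) - (k+1) * x * y^k := by
  intro k
  induction k with
  | zero => exact ⟨0, by push_cast; ring⟩
  | succ k ih =>
    obtain ⟨z, hz⟩ := ih
    refine ⟨z*(x+y) + (k+1) * y^k, ?_⟩
    have h1 : (x+y)^(k+1) = y^(k+1) + ((k:ℤ)+1)*x*y^k + x^2*z := by push_cast at hz ⊢; linarith
    have h2 : (x+y)^(k+1+1) = (x+y) * (x+y)^(k+1) := by ring
    rw [h2, h1]
    push_cast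
    ring

private lemma sq_dvd (x y : ℤ) (k : ℕ) : x^2 ∣ (x+y)^k - y^k - k * x * y^(k-1) := by
  cases k with
  | zero => simp
  | succ m => simpa using sq_dvd_aux x y m

private lemma perm_sum (n c t : ℕ) (hn : 1 < n) (hcn : Nat.Coprime c n) :
    ∑ a ∈ Finset.Ico 1 n, (((c*a) % n : ℕ) : ℤ)^t = ∑ a ∈ Finset.Ico 1 n, (a:ℤ)^t := by
  obtain ⟨u, -, hu⟩ := Nat.exists_mul_mod_eq_one_of_coprime hcn hn
  have hcu : c * u ≡ 1 [MOD n] := by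
    unfold Nat.ModEq; rw [hu, Nat.mod_eq_of_lt hn]
  have hmem : ∀ w a : ℕ, (¬ n ∣ w * a) → a ∈ Finset.Ico 1 n → (w*a) % n ∈ Finset.Ico 1 n := by
    intro w a hw ha
    rw [Finset.mem_Ico] at ha ⊢
    constructor
    · rcases Nat.eq_zero_or_pos ((w*a) % n) with h | h
      · exact absurd (Nat.dvd_of_mod_eq_zero h) hw
      · omega
    · exact Nat.mod_lt _ (by omega)
  have hndvd_c : ∀ a : ℕ, a ∈ Finset.Ico 1 n → ¬ n ∣ c * a := by
    intro a ha hdvd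
    rw [Finset.mem_Ico] at ha
    have := Nat.Coprime.dvd_of_dvd_mul_left (hcn.symm) hdvd
    have := Nat.le_of_dvd (by omega) this
    omega
  have hndvd_u : ∀ a : ℕ, a ∈ Finset.Ico 1 n → ¬ n ∣ u * a := by
    intro a ha hdvd
    rw [Finset.mem_Ico] at ha
    have h1 : c * (u * a) ≡ 0 [MOD n] := (Nat.modEq_zero_iff_dvd).mpr (Dvd.dvd.mul_left hdvd c)
    have h2 : c * (u * a) ≡ a [MOD n] := by
      calc c * (u * a) = (c * u) * a := by ring
        _ ≡ 1 * a [MOD n] := hcu.mul_right a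
        _ = a := by ring
    have : a ≡ 0 [MOD n] := h2.symm.trans h1
    have := (Nat.modEq_zero_iff_dvd).mp this
    have := Nat.le_of_dvd (by omega) this
    omega
  refine Finset.sum_nbij' (i := fun a => (c*a) % n) (j := fun b => (u*b) % n)
    (fun a ha => hmem c a (hndvd_c a ha) ha) (fun b hb => hmem u b (hndvd_u b hb) hb)
    ?_ ?_ (fun a ha => rfl)
  · intro a ha
    rw [Finset.mem_Ico] at ha
    have h2 : u * ((c*a) % n) ≡ a [MOD n] := by
      calc u * ((c*a) % n) ≡ u * (c*a) [MOD n] := (Nat.mod_modEq _ n).mul_left u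
        _ = (c*u) * a := by ring
        _ ≡ 1 * a [MOD n] := hcu.mul_right a
        _ = a := by ring
    calc (u * ((c*a) % n)) % n = a % n := h2
      _ = a := Nat.mod_eq_of_lt ha.2
  · intro b hb
    rw [Finset.mem_Ico] at hb
    have h2 : c * ((u*b) % n) ≡ b [MOD n] := by
      calc c * ((u*b) % n) ≡ c * (u*b) [MOD n] := (Nat.mod_modEq _ n).mul_left c
        _ = (c*u) * b := by ring
        _ ≡ 1 * b [MOD n] := hcu.mul_right b
        _ = b := by ring
    calc (c * ((u*b) % n)) % n = b % n := h2
      _ = b := Nat.mod_eq_of_lt hb.2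

/-- The Voronoi-type sum `∑ ⌊ca/n⌋ (ca mod n)^t`. -/
noncomputable def Rsum (c n t : ℕ) : ℤ :=
  ∑ a ∈ Finset.Ico 1 n, ((c*a)/n : ℕ) * (((c*a) % n : ℕ) : ℤ)^t

private lemma voronoi_int (n c k : ℕ) (hn : 1 < n) (hcn : Nat.Coprime c n) (hk : 1 ≤ k) :
    ((n:ℤ))^2 ∣ ((c:ℤ)^k - 1) * (∑ a ∈ Finset.Ico 1 n, (a:ℤ)^k)
      - (k:ℤ) * n * Rsum c n (k-1) := by
  have e2 := perm_sum n c k hn hcn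
  have hS1 : (c:ℤ)^k * (∑ a ∈ Finset.Ico 1 n, (a:ℤ)^k)
      = ∑ a ∈ Finset.Ico 1 n, ((c:ℤ)*a)^k := by
    rw [Finset.mul_sum]
    exact Finset.sum_congr rfl fun a _ => (mul_pow _ _ _).symm
  have hR : (k:ℤ) * n * Rsum c n (k-1)
      = ∑ a ∈ Finset.Ico 1 n,
          (k:ℤ) * ((n:ℤ) * ((c*a)/n : ℕ)) * (((c*a) % n : ℕ) : ℤ)^(k-1) := by
    rw [Rsum, Finset.mul_sum]
    exact Finset.sum_congr rfl fun a _ => by ring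
  have expand : ((c:ℤ)^k - 1) * (∑ a ∈ Finset.Ico 1 n, (a:ℤ)^k) - (k:ℤ) * n * Rsum c n (k-1)
      = (∑ a ∈ Finset.Ico 1 n, ((c:ℤ)*a)^k) - (∑ a ∈ Finset.Ico 1 n, (((c*a) % n : ℕ) : ℤ)^k)
        - (∑ a ∈ Finset.Ico 1 n,
            (k:ℤ) * ((n:ℤ) * ((c*a)/n : ℕ)) * (((c*a) % n : ℕ) : ℤ)^(k-1)) := by
    rw [← hS1, e2, ← hR]; ring
  rw [expand, ← Finset.sum_sub_distrib, ← Finset.sum_sub_distrib]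
  refine Finset.dvd_sum fun a ha => ?_
  have hda : (n:ℤ) * ((c*a)/n : ℕ) + (((c*a) % n : ℕ) : ℤ) = (c:ℤ) * a := by
    exact_mod_cast congrArg (fun x : ℕ => (x:ℤ)) (Nat.div_add_mod (c*a) n)
  rw [← hda]
  exact dvd_trans (by rw [mul_pow]; exact dvd_mul_right _ _) (sq_dvd _ _ k)

/-- Euler-type congruence for powers. -/
private lemma pow_congr (d t t' r : ℕ) (ht' : d+1 ≤ t') (htt' : t' ≤ t)
    (hdvd : (p-1)*p^d ∣ t - t') :
    ((p:ℤ))^(d+1) ∣ (r:ℤ)^t - (r:ℤ)^t' := by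
  by_cases hpr : p ∣ r
  · have hbase : (p:ℤ)^(d+1) ∣ (r:ℤ)^(d+1) :=
      pow_dvd_pow_of_dvd (Int.natCast_dvd_natCast.mpr hpr) (d+1)
    have h1 : (p:ℤ)^(d+1) ∣ (r:ℤ)^t' := dvd_trans hbase (pow_dvd_pow _ ht')
    have h2 : (p:ℤ)^(d+1) ∣ (r:ℤ)^t := dvd_trans hbase (pow_dvd_pow _ (le_trans ht' htt'))
    exact dvd_sub h2 h1
  · obtain ⟨m, hm⟩ := hdvd
    have hcop : r.Coprime (p^(d+1)) :=
      Nat.Coprime.pow_right _ (((Nat.Prime.coprime_iff_not_dvd hp.out).mpr hpr).symm)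
    have heuler : r ^ ((p-1)*p^d) ≡ 1 [MOD p^(d+1)] := by
      have h := Nat.ModEq.pow_totient hcop
      rwa [Nat.totient_prime_pow hp.out (by omega : 0 < d+1),
        (by omega : d+1-1 = d), mul_comm (p^d)] at h
    have hmod : r ^ (t - t') ≡ 1 [MOD p^(d+1)] := by
      rw [hm, pow_mul]
      simpa using heuler.pow m
    have hdvd1 : (p:ℤ)^(d+1) ∣ (r:ℤ)^(t-t') - 1 := by
      have h := Nat.modEq_iff_dvd.mp hmod.symm
      push_cast at h
      exact h
    have hsplit : (r:ℤ)^t = (r:ℤ)^t' * (r:ℤ)^(t-t') := by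
      rw [← pow_add]; congr 1; omega
    have : (p:ℤ)^(d+1) ∣ (r:ℤ)^t' * ((r:ℤ)^(t-t') - 1) := by
      exact dvd_mul_of_dvd_right hdvd1 _
    calc (p:ℤ)^(d+1) ∣ (r:ℤ)^t' * ((r:ℤ)^(t-t') - 1) := this
      _ = (r:ℤ)^t - (r:ℤ)^t' := by rw [hsplit]; ring

end Part2

section Part3

set_option linter.unusedSectionVars false

variable {p : ℕ} [hp : Fact p.Prime]

private lemma pnorm_sub_le {x y : ℚ} {C : ℚ} (hx : padicNorm p x ≤ C) (hy : padicNorm p y ≤ C) :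
    padicNorm p (x - y) ≤ C := le_trans padicNorm.sub (max_le hx hy)

private lemma pnorm_add_le {x y : ℚ} {C : ℚ} (hx : padicNorm p x ≤ C) (hy : padicNorm p y ≤ C) :
    padicNorm p (x + y) ≤ C := le_trans padicNorm.nonarchimedean (max_le hx hy)

private lemma pnorm_int_le (z : ℤ) : padicNorm p (z:ℚ) ≤ 1 := padicNorm.of_int z

private lemma pnorm_div_nat (x : ℚ) (j : ℕ) (hj : j ≠ 0) :
    padicNorm p (x / j) = padicNorm p x * (p:ℚ)^((padicValNat p j : ℤ)) := by
  rw [padicNorm.div, padicNorm_nat_eq j hj, zpow_neg, div_eq_mul_inv, inv_inv]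

private lemma alg1 (B C1 CK P kq jq : ℚ) (hk1 : kq + 1 ≠ 0) (hj : jq ≠ 0)
    (hq : CK * (kq+1) = C1 * jq) : B * C1 * P / (kq+1) = B * CK * (P/jq) := by
  field_simp
  linear_combination (-(B*P)) * hq

private lemma alg2 (N SQ E Z R u kq : ℚ) (hk : kq ≠ 0) (hN : N ≠ 0)
    (h1 : u*SQ - kq*N*R = N^2*Z) :
    u * ((SQ - E)/N) / kq - R = N*Z/kq - u*E/(kq*N) := by
  field_simp
  linear_combination h1

/-- Faulhaber tail bound: `‖ ∑_{a < p^M} a^k − p^M B_k ‖ ≤ p^(2−2M)`. -/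
private lemma faulhaber_tail (k M : ℕ) (hk : 1 ≤ k) (hM : 1 ≤ M) :
    padicNorm p ((∑ a ∈ Finset.range (p^M), (a:ℚ)^k) - ((p^M : ℕ):ℚ) * bernoulli k)
      ≤ (p:ℚ)^(2 - 2*(M:ℤ)) := by
  have faul := sum_range_pow (p^M) k
  rw [Finset.sum_range_succ, Nat.choose_succ_self_right] at faul
  have hK1 : ((k:ℚ) + 1) ≠ 0 := by positivity
  have hlast : bernoulli k * (↑(k + 1)) * ((p^M : ℕ):ℚ) ^ (k + 1 - k) / ((k:ℚ) + 1)
      = ((p^M : ℕ):ℚ) * bernoulli k := by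
    have h : k + 1 - k = 1 := by omega
    rw [h, pow_one]
    push_cast
    field_simp
  rw [hlast] at faul
  have key : (∑ a ∈ Finset.range (p^M), (a:ℚ)^k) - ((p^M : ℕ):ℚ) * bernoulli k
      = ∑ i ∈ Finset.range k, bernoulli i * ((k+1).choose i) * ((p^M:ℕ):ℚ)^(k+1-i) / ((k:ℚ)+1) := by
    rw [faul]; ring
  rw [key]
  refine padicNorm.sum_le' (fun i hi => ?_) (le_of_lt (zpow_pos_p _))
  have hik : i < k := Finset.mem_range.mp hi
  set j := k + 1 - i with hjdef
  have hj0 : j ≠ 0 := by omega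
  have hj2 : 2 ≤ j := by omega
  have hjQ : ((j:ℚ)) ≠ 0 := by exact_mod_cast hj0
  have hq : ((k.choose i : ℚ)) * ((k:ℚ)+1) = ((k+1).choose i : ℚ) * (j:ℚ) := by
    exact_mod_cast congrArg (fun x : ℕ => (x:ℚ)) (Nat.choose_mul_succ_eq k i)
  have hcast : (((p^M:ℕ)):ℚ)^j = (p:ℚ)^(M*j) := by push_cast [pow_mul]; ring
  have hterm := alg1 (bernoulli i) (((k+1).choose i : ℕ):ℚ) ((k.choose i : ℕ):ℚ)
    (((p^M:ℕ):ℚ)^j) (k:ℚ) (j:ℚ) hK1 hjQ hq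
  rw [hterm]
  have h3 : padicNorm p (((p^M:ℕ):ℚ)^j / (j : ℚ)) ≤ (p:ℚ)^(1 - 2*(M:ℤ)) := by
    rw [hcast]
    refine le_trans (norm_ppow_div M j hj0) ?_
    apply zpow_le_p
    -- -(M*j) + j - 1 ≤ 1 - 2M  for j ≥ 2, M ≥ 1
    have h1 : (2:ℤ) ≤ (j:ℤ) := by exact_mod_cast hj2
    have h2 : (1:ℤ) ≤ (M:ℤ) := by exact_mod_cast hM
    nlinarith
  have hsplit : (p:ℚ)^(2 - 2*(M:ℤ)) = (p:ℚ) * (p:ℚ)^(1 - 2*(M:ℤ)) := by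
    rw [show (2 - 2*(M:ℤ)) = 1 + (1 - 2*(M:ℤ)) by ring, zpow_add₀ qp_ne, zpow_one]
  calc padicNorm p (bernoulli i * (k.choose i) * (((p^M:ℕ):ℚ)^j / (j : ℚ)))
      ≤ ((p:ℚ) * 1) * (p:ℚ)^(1 - 2*(M:ℤ)) := by
        refine pnorm_mul_le (pnorm_mul_le (bernoulli_padicNorm_le i) (padicNorm.of_nat _) zero_le_one) h3 ?_
        exact le_of_lt (zpow_pos_p _)
    _ = (p:ℚ)^(2 - 2*(M:ℤ)) := by rw [mul_one, hsplit]
/-- Rational Voronoi congruence. -/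
private lemma voronoi_rat (c k M d : ℕ) (hc : ¬ p ∣ c) (hk : 1 ≤ k)
    (hM : padicValNat p k + d + 3 ≤ M) :
    padicNorm p (((c:ℚ)^k - 1) * bernoulli k / k - ((Rsum c (p^M) (k-1) : ℤ) : ℚ))
      ≤ (p:ℚ)^(-((d:ℤ)+1)) := by
  have hM1 : 1 ≤ M := by omega
  have hp1 : 1 < p := hp.out.one_lt
  have hn : 1 < p^M := Nat.one_lt_pow (by omega) hp1
  have hcn : Nat.Coprime c (p^M) :=
    Nat.Coprime.pow_right M (((Nat.Prime.coprime_iff_not_dvd hp.out).mpr hc).symm)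
  obtain ⟨Z, hZ⟩ := voronoi_int (p^M) c k hn hcn hk
  -- move to ℚ
  have hQ1 : ((c:ℚ)^k - 1) * (∑ a ∈ Finset.Ico 1 (p^M), (a:ℚ)^k)
      - (k:ℚ) * ((p^M:ℕ):ℚ) * ((Rsum c (p^M) (k-1) : ℤ) : ℚ) = ((p^M:ℕ):ℚ)^2 * (Z:ℚ) := by
    have := congrArg (fun z : ℤ => (z:ℚ)) hZ
    push_cast at this ⊢
    convert this using 2
  have hIco : (∑ a ∈ Finset.Ico 1 (p^M), (a:ℚ)^k) = ∑ a ∈ Finset.range (p^M), (a:ℚ)^k := by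
    rw [Finset.range_eq_Ico, Finset.sum_eq_sum_Ico_succ_bot (by omega : 0 < p^M)]
    rw [Nat.cast_zero, zero_pow (by omega : k ≠ 0), zero_add]
  rw [hIco] at hQ1
  set SQ := ∑ a ∈ Finset.range (p^M), (a:ℚ)^k with hSQ
  set E := SQ - ((p^M:ℕ):ℚ) * bernoulli k with hE
  have hEnorm : padicNorm p E ≤ (p:ℚ)^(2 - 2*(M:ℤ)) := faulhaber_tail k M hk hM1
  have hkQ : (k:ℚ) ≠ 0 := Nat.cast_ne_zero.mpr (by omega)
  have hnQ : ((p^M:ℕ):ℚ) ≠ 0 := Nat.cast_ne_zero.mpr (by positivity)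
  have hnorm_n : padicNorm p ((p^M:ℕ):ℚ) = (p:ℚ)^(-(M:ℤ)) := by
    rw [padicNorm_nat_eq _ (by positivity), padicValNat.prime_pow]
  set v := padicValNat p k with hv
  have hB : bernoulli k = (SQ - E)/((p^M:ℕ):ℚ) := by rw [hE]; field_simp; ring
  have hgoal : ((c:ℚ)^k - 1) * bernoulli k / k - ((Rsum c (p^M) (k-1) : ℤ) : ℚ)
      = ((p^M:ℕ):ℚ) * (Z:ℚ) / k - ((c:ℚ)^k - 1) * E / ((k:ℚ) * ((p^M:ℕ):ℚ)) := by
    rw [hB]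
    exact alg2 ((p^M:ℕ):ℚ) SQ E (Z:ℚ) ((Rsum c (p^M) (k-1) : ℤ) : ℚ) ((c:ℚ)^k - 1) (k:ℚ) hkQ hnQ hQ1
  rw [hgoal]
  have bound1 : padicNorm p (((p^M:ℕ):ℚ) * (Z:ℚ) / k) ≤ (p:ℚ)^(-((d:ℤ)+1)) := by
    calc padicNorm p (((p^M:ℕ):ℚ) * (Z:ℚ) / k)
        = padicNorm p (((p^M:ℕ):ℚ) * (Z:ℚ)) * (p:ℚ)^((v:ℤ)) := pnorm_div_nat _ k (by omega)
      _ ≤ ((p:ℚ)^(-(M:ℤ)) * 1) * (p:ℚ)^((v:ℤ)) := by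
          refine mul_le_mul_of_nonneg_right ?_ (le_of_lt (zpow_pos_p _))
          exact pnorm_mul_le (le_of_eq hnorm_n) (pnorm_int_le Z) zero_le_one
      _ = (p:ℚ)^(-(M:ℤ) + (v:ℤ)) := by rw [mul_one, ← zpow_add₀ qp_ne]
      _ ≤ (p:ℚ)^(-((d:ℤ)+1)) := zpow_le_p (by omega)
  have bound2 : padicNorm p (((c:ℚ)^k - 1) * E / ((k:ℚ) * ((p^M:ℕ):ℚ))) ≤ (p:ℚ)^(-((d:ℤ)+1)) := by
    have hsplit2 : ((c:ℚ)^k - 1) * E / ((k:ℚ) * ((p^M:ℕ):ℚ))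
        = (((c:ℚ)^k - 1) * E) / (k:ℚ) / ((p^M:ℕ):ℚ) := by ring
    have hcint : padicNorm p ((c:ℚ)^k - 1) ≤ 1 := by
      have : ((c:ℚ)^k - 1) = (((c^k - 1 : ℤ)):ℚ) := by push_cast; ring
      rw [this]; exact pnorm_int_le _
    rw [hsplit2, padicNorm.div, hnorm_n, pnorm_div_nat _ k (by omega), ← hv]
    rw [div_eq_mul_inv, ← zpow_neg, neg_neg]
    calc padicNorm p (((c:ℚ)^k - 1) * E) * (p:ℚ)^((v:ℤ)) * (p:ℚ)^((M:ℤ))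
        ≤ ((1 * (p:ℚ)^(2 - 2*(M:ℤ))) * (p:ℚ)^((v:ℤ))) * (p:ℚ)^((M:ℤ)) := by
          refine mul_le_mul_of_nonneg_right (mul_le_mul_of_nonneg_right ?_ (le_of_lt (zpow_pos_p _))) (le_of_lt (zpow_pos_p _))
          exact pnorm_mul_le hcint hEnorm (le_of_lt (zpow_pos_p _))
      _ = (p:ℚ)^((2 - 2*(M:ℤ)) + (v:ℤ) + (M:ℤ)) := by
          rw [one_mul, ← zpow_add₀ qp_ne, ← zpow_add₀ qp_ne]
      _ ≤ (p:ℚ)^(-((d:ℤ)+1)) := zpow_le_p (by omega)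
  exact pnorm_sub_le bound1 bound2

end Part3

section Part4

set_option linter.unusedSectionVars false

variable {p : ℕ} [hp : Fact p.Prime]

private lemma Rsum_congr (c n d K K' : ℕ) (hK' : d + 2 ≤ K') (hKK' : K' ≤ K)
    (hdvd : (p-1)*p^d ∣ K - K') :
    (p:ℤ)^(d+1) ∣ Rsum c n (K-1) - Rsum c n (K'-1) := by
  rw [Rsum, Rsum, ← Finset.sum_sub_distrib]
  refine Finset.dvd_sum fun a ha => ?_
  have h : (((c*a)/n : ℕ) : ℤ) * (((c*a) % n : ℕ) : ℤ)^(K-1)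
      - (((c*a)/n : ℕ) : ℤ) * (((c*a) % n : ℕ) : ℤ)^(K'-1)
      = (((c*a)/n : ℕ) : ℤ) * ((((c*a) % n : ℕ) : ℤ)^(K-1) - (((c*a) % n : ℕ) : ℤ)^(K'-1)) := by
    ring
  rw [h]
  refine dvd_mul_of_dvd_right ?_ _
  refine pow_congr d (K-1) (K'-1) _ (by omega) (by omega) ?_
  have : K - 1 - (K' - 1) = K - K' := by omega
  rw [this]
  exact hdvd

/-- Kummer's congruence. -/
lemma kummer (d K K' : ℕ) (hK' : d + 2 ≤ K') (hKK' : K' ≤ K)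
    (hdvd : (p-1)*p^d ∣ K - K') (hndvd : ¬ (p-1) ∣ K) :
    padicNorm p (bernoulli K / K) ≤ 1 ∧ padicNorm p (bernoulli K' / K') ≤ 1 ∧
    padicNorm p (bernoulli K / K - bernoulli K' / K') ≤ (p:ℚ)^(-((d:ℤ)+1)) := by
  -- get a primitive root c
  obtain ⟨g, hg⟩ := IsCyclic.exists_generator (α := (ZMod p)ˣ)
  have horder : orderOf g = p - 1 := by
    rw [orderOf_eq_card_of_forall_mem_zpowers hg, Nat.card_eq_fintype_card,
      ZMod.card_units_eq_totient, Nat.totient_prime hp.out]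
  set c := ((g : ZMod p)).val with hc
  have hcg : ((c:ℕ) : ZMod p) = (g : ZMod p) := by
    rw [hc, ZMod.natCast_val, ZMod.cast_id]
  have hcp : ¬ p ∣ c := by
    intro hdvd'
    have h0 : ((c:ℕ) : ZMod p) = 0 := (ZMod.natCast_eq_zero_iff c p).mpr hdvd'
    rw [hcg] at h0
    exact Units.ne_zero g h0
  have hndvd' : ¬ (p-1) ∣ K' := by
    intro hK'd
    obtain ⟨m, hm⟩ := hdvd
    have : (p-1) ∣ K - K' := ⟨p^d*m, by rw [hm]; ring⟩
    refine hndvd ?_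
    have hKeq : K = (K - K') + K' := by omega
    rw [hKeq]
    exact Nat.dvd_add this hK'd
  have hck : ¬ (p:ℤ) ∣ ((c:ℤ)^K - 1) := by
    intro hdvd'
    have h0 : (((( c:ℤ)^K - 1 : ℤ)) : ZMod p) = 0 := by
      rw [ZMod.intCast_zmod_eq_zero_iff_dvd]
      exact_mod_cast hdvd'
    push_cast at h0
    rw [hcg] at h0
    have hval : (g : ZMod p)^K = 1 := by linear_combination h0
    have hunit : g^K = 1 := by
      ext
      push_cast
      exact hval
    have := orderOf_dvd_of_pow_eq_one hunit
    rw [horder] at this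
    exact hndvd this
  -- Voronoi for both exponents with the same modulus
  set M := padicValNat p K + padicValNat p K' + d + 3 with hM
  have hKpos : 1 ≤ K := by omega
  have hK'pos : 1 ≤ K' := by omega
  have v1 := voronoi_rat (p := p) c K M d hcp hKpos (by omega)
  have v2 := voronoi_rat (p := p) c K' M d hcp hK'pos (by omega)
  set R := ((Rsum c (p^M) (K-1) : ℤ) : ℚ) with hR
  set R' := ((Rsum c (p^M) (K'-1) : ℤ) : ℚ) with hR'
  set u := ((c:ℚ)^K - 1) with hu
  set u' := ((c:ℚ)^K' - 1) with hu'
  have hpd1 : (0:ℚ) < (p:ℚ)^(-((d:ℤ)+1)) := zpow_pos_p _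
  have hple : (p:ℚ)^(-((d:ℤ)+1)) ≤ 1 := by
    rw [show (1:ℚ) = (p:ℚ)^(0:ℤ) from (zpow_zero _).symm]
    exact zpow_le_p (by omega)
  have hunorm : padicNorm p u = 1 := by
    have hcast : u = (((c^K - 1 : ℤ)) : ℚ) := by rw [hu]; push_cast; ring
    rw [hcast]
    exact (padicNorm.int_eq_one_iff _).mpr hck
  have hu'norm : padicNorm p u' = 1 := by
    have hck' : ¬ (p:ℤ) ∣ ((c:ℤ)^K' - 1) := by
      intro hdvd'
      -- same as hck, with K'
      have h0 : (((( c:ℤ)^K' - 1 : ℤ)) : ZMod p) = 0 := by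
        rw [ZMod.intCast_zmod_eq_zero_iff_dvd]
        exact_mod_cast hdvd'
      push_cast at h0
      rw [hcg] at h0
      have hval : (g : ZMod p)^K' = 1 := by linear_combination h0
      have hunit : g^K' = 1 := by
        ext
        push_cast
        exact hval
      have := orderOf_dvd_of_pow_eq_one hunit
      rw [horder] at this
      exact hndvd' this
    have hcast : u' = (((c^K' - 1 : ℤ)) : ℚ) := by rw [hu']; push_cast; ring
    rw [hcast]
    exact (padicNorm.int_eq_one_iff _).mpr hck'
  -- norm bounds
  have hxnorm : padicNorm p (bernoulli K / K) ≤ 1 := by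
    have he : u * (bernoulli K / K) = (u * bernoulli K / K - R) + R := by ring
    have h1 : padicNorm p (u * (bernoulli K / K)) ≤ 1 := by
      rw [he]
      exact pnorm_add_le (le_trans v1 hple) (pnorm_int_le _)
    rwa [padicNorm.mul, hunorm, one_mul] at h1
  have hx'norm : padicNorm p (bernoulli K' / K') ≤ 1 := by
    have he : u' * (bernoulli K' / K') = (u' * bernoulli K' / K' - R') + R' := by ring
    have h1 : padicNorm p (u' * (bernoulli K' / K')) ≤ 1 := by
      rw [he]
      exact pnorm_add_le (le_trans v2 hple) (pnorm_int_le _)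
    rwa [padicNorm.mul, hu'norm, one_mul] at h1
  refine ⟨hxnorm, hx'norm, ?_⟩
  have hRR' : padicNorm p (R - R') ≤ (p:ℚ)^(-((d:ℤ)+1)) := by
    have hdv := Rsum_congr (p := p) c (p^M) d K K' hK' hKK' hdvd
    have : R - R' = ((Rsum c (p^M) (K-1) - Rsum c (p^M) (K'-1) : ℤ) : ℚ) := by push_cast; ring
    rw [this]
    have := padicNorm.dvd_iff_norm_le (p := p) (n := d+1)
      (z := Rsum c (p^M) (K-1) - Rsum c (p^M) (K'-1))
    rw [show (-((d:ℤ)+1)) = (-(((d+1):ℕ)):ℤ) by push_cast; ring]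
    refine this.mp ?_
    exact_mod_cast hdv
  have huu' : padicNorm p (u - u') ≤ (p:ℚ)^(-((d:ℤ)+1)) := by
    have hdv : (p:ℤ)^(d+1) ∣ (c:ℤ)^K - (c:ℤ)^K' := pow_congr d K K' c (by omega) hKK' hdvd
    have hcast : u - u' = (((c^K - c^K' : ℤ)) : ℚ) := by rw [hu, hu']; push_cast; ring
    rw [hcast, show (-((d:ℤ)+1)) = (-(((d+1):ℕ)):ℤ) by push_cast; ring]
    refine (padicNorm.dvd_iff_norm_le (p := p) (n := d+1) (z := (c:ℤ)^K - c^K')).mp ?_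
    exact_mod_cast hdv
  have hkey : u * (bernoulli K / K - bernoulli K' / K')
      = ((u * bernoulli K / K - R) - (u' * bernoulli K' / K' - R'))
        - (u - u') * (bernoulli K' / K') + (R - R') := by ring
  have h1 : padicNorm p (u * (bernoulli K / K - bernoulli K' / K')) ≤ (p:ℚ)^(-((d:ℤ)+1)) := by
    rw [hkey]
    refine pnorm_add_le (pnorm_sub_le (pnorm_sub_le v1 v2) ?_) hRR'
    calc padicNorm p ((u - u') * (bernoulli K' / K'))
        ≤ (p:ℚ)^(-((d:ℤ)+1)) * 1 := pnorm_mul_le huu' hx'norm zero_le_one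
      _ = (p:ℚ)^(-((d:ℤ)+1)) := mul_one _
  rwa [padicNorm.mul, hunorm, one_mul] at h1

end Part4

section Part5

set_option linter.unusedSectionVars false

variable {p : ℕ} [hp : Fact p.Prime]

private lemma sigmaQ_cast (t m : ℕ) : sigmaQ t m = ((∑ e ∈ m.divisors, e^t : ℕ) : ℚ) := by
  rw [sigmaQ]
  push_cast
  rfl

private lemma sigma_congr (d K K' n : ℕ) (hK' : d + 2 ≤ K') (hKK' : K' ≤ K)
    (hdvd : (p-1)*p^d ∣ K - K') :
    padicNorm p (sigmaQ (K-1) n - sigmaQ (K'-1) n) ≤ (p:ℚ)^(-(((d+1):ℕ):ℤ)) := by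
  have hcast : sigmaQ (K-1) n - sigmaQ (K'-1) n
      = ((∑ e ∈ n.divisors, ((e:ℤ)^(K-1) - (e:ℤ)^(K'-1)) : ℤ) : ℚ) := by
    rw [sigmaQ, sigmaQ]
    push_cast [Finset.sum_sub_distrib]
    rfl
  rw [hcast]
  refine (padicNorm.dvd_iff_norm_le).mp ?_
  have hc : ((p^(d+1) : ℕ) : ℤ) = (p:ℤ)^(d+1) := by push_cast; ring
  rw [hc]
  refine Finset.dvd_sum fun e he => ?_
  refine pow_congr d (K-1) (K'-1) e (by omega) (by omega) ?_
  have h : K - 1 - (K' - 1) = K - K' := by omega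
  rw [h]
  exact hdvd

/-- The main even case, assuming `K' ≤ K`. -/
private lemma main_case (d K K' : ℕ) (hp2 : 2 < p)
    (hK' : d + 6 ≤ K') (hKK' : K' ≤ K) (hdvd : (p-1)*p^d ∣ K - K') (hnd : ¬ (p-1) ∣ K) :
    SCongr p (d+1)
      (PowerSeries.mk fun n => if n = 0 then -(bernoulli K) / (2*(K:ℚ)) else sigmaQ (K-1) n)
      (PowerSeries.mk fun n => if n = 0 then -(bernoulli K') / (2*(K':ℚ)) else sigmaQ (K'-1) n) := by
  obtain ⟨hx, hx', hdiff⟩ := kummer d K K' (by omega) hKK' hdvd hnd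
  have hKQ : ((K:ℚ)) ≠ 0 := Nat.cast_ne_zero.mpr (by omega)
  have hK'Q : ((K':ℚ)) ≠ 0 := Nat.cast_ne_zero.mpr (by omega)
  have h2norm : padicNorm p (2:ℚ) = 1 := by
    have h2 : ((2:ℤ):ℚ) = (2:ℚ) := by norm_num
    rw [← h2]
    refine (padicNorm.int_eq_one_iff _).mpr ?_
    intro hdd
    have := Int.le_of_dvd (by norm_num) hdd
    omega
  have hexp : (p:ℚ)^(-(((d+1):ℕ):ℤ)) = (p:ℚ)^(-((d:ℤ)+1)) := by norm_cast
  refine ⟨?_, ?_, ?_⟩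
  · intro n
    rw [PowerSeries.coeff_mk]
    by_cases hn : n = 0
    · rw [if_pos hn]
      have he : -(bernoulli K) / (2*(K:ℚ)) = -(bernoulli K / K / 2) := by
        field_simp
      rw [he, padicNorm.neg, padicNorm.div, h2norm, div_one]
      exact hx
    · rw [if_neg hn, sigmaQ_cast]
      exact padicNorm.of_nat _
  · intro n
    rw [PowerSeries.coeff_mk]
    by_cases hn : n = 0
    · rw [if_pos hn]
      have he : -(bernoulli K') / (2*(K':ℚ)) = -(bernoulli K' / K' / 2) := by
        field_simp
      rw [he, padicNorm.neg, padicNorm.div, h2norm, div_one]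
      exact hx'
    · rw [if_neg hn, sigmaQ_cast]
      exact padicNorm.of_nat _
  · intro n
    rw [map_sub, PowerSeries.coeff_mk, PowerSeries.coeff_mk, hexp]
    by_cases hn : n = 0
    · rw [if_pos hn, if_pos hn]
      have he : -(bernoulli K) / (2*(K:ℚ)) - (-(bernoulli K') / (2*(K':ℚ)))
          = -((bernoulli K / K - bernoulli K' / K') / 2) := by
        field_simp
        ring
      rw [he, padicNorm.neg, padicNorm.div, h2norm, div_one]
      exact hdiff
    · rw [if_neg hn, if_neg hn, ← hexp]
      exact sigma_congr d K K' n (by omega) hKK' hdvd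

end Part5

section Part6

private lemma SCongr_symm {p N : ℕ} {F H : PowerSeries ℚ} (h : SCongr p N F H) :
    SCongr p N H F := by
  obtain ⟨a, b, c⟩ := h
  refine ⟨b, a, fun n => ?_⟩
  have heq : PowerSeries.coeff n (H - F) = -(PowerSeries.coeff n (F - H)) := by
    rw [map_sub, map_sub]; ring
  rw [heq, padicNorm.neg]
  exact c n

private lemma poly_eventually_ge (f : Polynomial ℤ) (hdeg : 0 < f.natDegree)
    (hlc : 0 < f.leadingCoeff) (C : ℤ) :
    ∃ P : ℕ, ∀ x : ℕ, P < x → C ≤ f.eval (x:ℤ) := by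
  set D := f.natDegree with hD
  set S : ℤ := ∑ i ∈ Finset.range D, |f.coeff i| with hS
  have hS0 : 0 ≤ S := Finset.sum_nonneg fun i _ => abs_nonneg _
  refine ⟨(S + max C 0).toNat + 1, fun x hx => ?_⟩
  have hxZ : S + max C 0 + 1 ≤ (x:ℤ) := by omega
  have hmax0 : (0:ℤ) ≤ max C 0 := le_max_right C 0
  have hx1 : (1:ℤ) ≤ (x:ℤ) := by omega
  have heval : f.eval (x:ℤ) = ∑ i ∈ Finset.range (D+1), f.coeff i * (x:ℤ)^i :=
    f.eval_eq_sum_range (x:ℤ)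
  rw [Finset.sum_range_succ] at heval
  have hterm : ∀ i ∈ Finset.range D, -(|f.coeff i| * (x:ℤ)^(D-1)) ≤ f.coeff i * (x:ℤ)^i := by
    intro i hi
    rw [Finset.mem_range] at hi
    have habs : |f.coeff i * (x:ℤ)^i| ≤ |f.coeff i| * (x:ℤ)^(D-1) := by
      rw [abs_mul, abs_pow, abs_of_nonneg (by omega : (0:ℤ) ≤ (x:ℤ))]
      refine mul_le_mul_of_nonneg_left ?_ (abs_nonneg _)
      exact pow_le_pow_right₀ hx1 (by omega)
    have := neg_abs_le (f.coeff i * (x:ℤ)^i)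
    linarith
  have hsum : -(S * (x:ℤ)^(D-1)) ≤ ∑ i ∈ Finset.range D, f.coeff i * (x:ℤ)^i := by
    have h2 := Finset.sum_le_sum hterm
    have h3 : ∑ i ∈ Finset.range D, -(|f.coeff i| * (x:ℤ)^(D-1)) = -(S * (x:ℤ)^(D-1)) := by
      rw [Finset.sum_neg_distrib, ← Finset.sum_mul]
    linarith
  have hcd : (1:ℤ) ≤ f.coeff D := hlc
  have hxD : (x:ℤ)^D = (x:ℤ)^(D-1) * x := by
    rw [← pow_succ]
    congr 1
    omega
  have hpow1 : (1:ℤ) ≤ (x:ℤ)^(D-1) := one_le_pow₀ hx1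
  have hxpos : (0:ℤ) ≤ (x:ℤ)^D := pow_nonneg (by omega) D
  have hlcx : (x:ℤ)^D ≤ f.coeff D * (x:ℤ)^D := by nlinarith
  have hkey : (x:ℤ) - S ≤ f.eval (x:ℤ) := by nlinarith
  have hC : C ≤ max C 0 := le_max_left C 0
  linarith

end Part6

theorem statement2 (f g : Polynomial ℤ) (hfg : f ≠ g)
    (hfdeg : 0 < f.natDegree) (hgdeg : 0 < g.natDegree)
    (hflc : 0 < f.leadingCoeff) (hglc : 0 < g.leadingCoeff)
    (h1 : f.eval 1 = g.eval 1) (h1ne : f.eval 1 ≠ 0)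
    (d : ℕ) (hd : Polynomial.X ^ d ∣ (f - g)) (hd' : ¬ Polynomial.X ^ (d + 1) ∣ (f - g)) :
    ∃ P : ℕ, ∀ p : ℕ, p.Prime → P < p →
      SCongr p (d + 1) (G (f.eval (p : ℤ))) (G (g.eval (p : ℤ))) := by
  classical
  obtain ⟨h, hh⟩ := hd
  have hh1 : h.eval 1 = 0 := by
    have hroot : (f - g).eval 1 = 0 := by
      rw [Polynomial.eval_sub]; omega
    rw [hh] at hroot
    simpa using hroot
  obtain ⟨w, hw⟩ := (Polynomial.dvd_iff_isRoot.mpr hh1)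
  obtain ⟨Pf, hPf⟩ := poly_eventually_ge f hfdeg hflc ((d:ℤ) + 6)
  obtain ⟨Pg, hPg⟩ := poly_eventually_ge g hgdeg hglc ((d:ℤ) + 6)
  refine ⟨Pf + Pg + (f.eval 1).natAbs + 2, fun p pp hP => ?_⟩
  haveI : Fact p.Prime := ⟨pp⟩
  have hp2 : 2 < p := by omega
  set k := f.eval (p:ℤ) with hk
  set k' := g.eval (p:ℤ) with hk'
  have hkf : (d:ℤ) + 6 ≤ k := hPf p (by omega)
  have hkg : (d:ℤ) + 6 ≤ k' := hPg p (by omega)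
  have hmodf : ((p:ℤ) - 1) ∣ (k - f.eval 1) := by
    have := Polynomial.sub_dvd_eval_sub (p:ℤ) 1 f
    simpa using this
  have hmodg : ((p:ℤ) - 1) ∣ (k' - g.eval 1) := by
    have := Polynomial.sub_dvd_eval_sub (p:ℤ) 1 g
    simpa using this
  have hoddp : Odd (p:ℤ) := by exact_mod_cast pp.odd_of_ne_two (by omega)
  have hparf : Even k ↔ Even (f.eval 1) := by
    obtain ⟨t, ht⟩ := hmodf
    have hkk : k = f.eval 1 + ((p:ℤ)-1)*t := by linarith
    have heven : Even (((p:ℤ)-1)*t) := by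
      refine Even.mul_right ?_ t
      obtain ⟨m, hm⟩ := hoddp
      exact ⟨m, by omega⟩
    rw [hkk, Int.even_add]
    tauto
  have hparg : Even k' ↔ Even (f.eval 1) := by
    obtain ⟨t, ht⟩ := hmodg
    have hkk : k' = g.eval 1 + ((p:ℤ)-1)*t := by linarith
    have heven : Even (((p:ℤ)-1)*t) := by
      refine Even.mul_right ?_ t
      obtain ⟨m, hm⟩ := hoddp
      exact ⟨m, by omega⟩
    rw [hkk, Int.even_add, ← h1]
    tauto
  by_cases hev : Even (f.eval 1)
  · -- even case
    have hkeven : Even k := hparf.mpr hev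
    have hk'even : Even k' := hparg.mpr hev
    have hdvdZ : ((p:ℤ)-1) * (p:ℤ)^d ∣ k - k' := by
      have hfg2 : k - k' = (f-g).eval (p:ℤ) := by rw [Polynomial.eval_sub]
      rw [hfg2, hh, hw]
      refine ⟨w.eval (p:ℤ), ?_⟩
      simp [Polynomial.eval_mul, Polynomial.eval_pow, Polynomial.eval_sub]
      ring
    have hnddvd : ∀ m : ℤ, (m = k ∨ m = k') → ¬ ((p:ℤ)-1) ∣ m := by
      intro m hm hdd
      have hdf1 : ((p:ℤ)-1) ∣ f.eval 1 := by
        rcases hm with rfl | rfl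
        · have := dvd_sub hdd hmodf; simpa using this
        · rw [h1]; have := dvd_sub hdd hmodg; simpa using this
      have habs := Int.le_of_dvd (abs_pos.mpr h1ne) ((dvd_abs _ _).mpr hdf1)
      have hna : |f.eval 1| = ((f.eval 1).natAbs : ℤ) := Int.abs_eq_natAbs _
      omega
    unfold G
    rw [if_pos ⟨by linarith, hkeven⟩, if_pos ⟨by linarith, hk'even⟩]
    set K := k.toNat with hKdef
    set K' := k'.toNat with hK'def
    have hkK : (K:ℤ) = k := Int.toNat_of_nonneg (by linarith)
    have hk'K : ((K':ℕ):ℤ) = k' := Int.toNat_of_nonneg (by linarith)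
    have hqk : ((k : ℤ) : ℚ) = (K:ℚ) := by rw [← hkK]; push_cast; ring
    have hqk' : ((k' : ℤ) : ℚ) = (K':ℚ) := by rw [← hk'K]; push_cast; ring
    simp only [hqk, hqk']
    have hK6 : d + 6 ≤ K := by omega
    have hK'6 : d + 6 ≤ K' := by omega
    have hc1 : (((p-1)*p^d : ℕ) : ℤ) = ((p:ℤ)-1)*(p:ℤ)^d := by
      rw [Nat.cast_mul, Nat.cast_pow, Nat.cast_sub (le_of_lt pp.one_lt), Nat.cast_one]
    have hc3 : ((p - 1 : ℕ) : ℤ) = (p:ℤ) - 1 := by omega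
    rcases le_total K' K with hle | hle
    · refine main_case d K K' hp2 (by omega) hle ?_ ?_
      · refine Int.natCast_dvd_natCast.mp ?_
        have hc2 : ((K - K' : ℕ) : ℤ) = (K:ℤ) - (K':ℤ) := by omega
        rw [hc1, hc2, hkK, hk'K]
        exact hdvdZ
      · intro hdd
        refine hnddvd k (Or.inl rfl) ?_
        have hcast := Int.natCast_dvd_natCast.mpr hdd
        rw [hkK, hc3] at hcast
        exact hcast
    · refine SCongr_symm (main_case d K' K hp2 (by omega) hle ?_ ?_)
      · refine Int.natCast_dvd_natCast.mp ?_
        have hc2 : ((K' - K : ℕ) : ℤ) = (K':ℤ) - (K:ℤ) := by omega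
        rw [hc1, hc2, hkK, hk'K]
        have := dvd_neg.mpr hdvdZ
        simpa using this
      · intro hdd
        refine hnddvd k' (Or.inr rfl) ?_
        have hcast := Int.natCast_dvd_natCast.mpr hdd
        rw [hk'K, hc3] at hcast
        exact hcast
  · -- odd case: both sides are 0
    have h4f : ¬(4 ≤ k ∧ Even k) := fun hc => hev (hparf.mp hc.2)
    have h4g : ¬(4 ≤ k' ∧ Even k') := fun hc => hev (hparg.mp hc.2)
    unfold G
    rw [if_neg h4f, if_neg h4g]
    refine ⟨fun n => ?_, fun n => ?_, fun n => ?_⟩ <;>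
      simp only [sub_zero, map_zero, padicNorm.zero]
    · exact zero_le_one
    · exact zero_le_one
    · positivity
end

section
/- Let N be a positive integer, let f_1,…,f_n ∈ ℤ[t] be non-constant polynomials with positive leading coefficients, and let g_1,…,g_n ∈ ℚ(t). Assume conditions C2, C3 and C4 hold. Then there exists a positive integer P such that for every prime p > P and every positive integer m one has v_p( ∑_{i=1}^n g_i(p)·a_m(G*_{f_i(p)}) ) ≥ N, where a_m(G*_k) = σ*_{k−1}(m) = ∑_{d∣m, p∤d} d^{k−1} for even integers k ≥ 4, and a_m(G*_k) = 0 if k is not an even integer ≥ 4. -/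
open scoped BigOperators

noncomputable def tval (h : RatFunc ℚ) : WithTop ℤ :=
  open scoped Classical in
  if h = 0 then ⊤
  else (((h.num.rootMultiplicity 0 : ℤ) - (h.denom.rootMultiplicity 0 : ℤ) : ℤ) : WithTop ℤ)

noncomputable def FQ (f : Polynomial ℤ) : RatFunc ℚ :=
  algebraMap (Polynomial ℚ) (RatFunc ℚ) (f.map (Int.castRingHom ℚ))

noncomputable def gval (p : ℕ) (g : RatFunc ℚ) : ℚ := RatFunc.eval (RingHom.id ℚ) (p : ℚ) g

/-- `M`, the minimum of the t-adic valuations of the `g i`. -/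
noncomputable def Mval {n : ℕ} (g : Fin n → RatFunc ℚ) : WithTop ℤ :=
  Finset.univ.inf fun i => tval (g i)

/-- Condition C1. -/
noncomputable def C1cond {n : ℕ} (N : ℕ) (f : Fin n → Polynomial ℤ) (g0 : RatFunc ℚ)
    (g : Fin n → RatFunc ℚ) : Prop :=
  ((N : ℤ) : WithTop ℤ) ≤ tval
    (g0
      + (1 / 2 : RatFunc ℚ) * (1 - RatFunc.X⁻¹) *
          ∑ i ∈ Finset.univ.filter (fun i => (f i).eval 1 = 0), g i * (FQ (f i))⁻¹
      + (1 / 2 : RatFunc ℚ) *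
          ∑ i ∈ Finset.univ.filter (fun i => Even ((f i).eval 1) ∧ 4 ≤ (f i).eval 1),
            RatFunc.C (bernoulli ((f i).eval 1).toNat / (((f i).eval 1 : ℤ) : ℚ)) *
              (1 - RatFunc.X ^ (((f i).eval 1).toNat - 1)) * g i)

/-- Condition C2. -/
noncomputable def C2cond {n : ℕ} (N : ℕ) (f : Fin n → Polynomial ℤ)
    (g : Fin n → RatFunc ℚ) : Prop :=
  ∀ l : ℤ, Even l → l ≤ 2 → (∃ i, (f i).eval 1 = l) →
    ∀ m : ℕ, ((m : ℤ) : WithTop ℤ) + Mval g ≤ ((N : ℤ) : WithTop ℤ) →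
      (((N : ℤ) - (m : ℤ) : ℤ) : WithTop ℤ) ≤
        tval (∑ i ∈ Finset.univ.filter (fun i => (f i).eval 1 = l), g i * FQ (f i) ^ m)

/-- Condition C3. -/
noncomputable def C3cond {n : ℕ} (N : ℕ) (f : Fin n → Polynomial ℤ)
    (g : Fin n → RatFunc ℚ) : Prop :=
  ∀ l : ℤ, Even l → 4 ≤ l → (∃ i, (f i).eval 1 = l) →
    ∀ m : ℕ, 1 ≤ m → ((m : ℤ) : WithTop ℤ) + Mval g ≤ ((N : ℤ) : WithTop ℤ) →
      (((N : ℤ) - (m : ℤ) : ℤ) : WithTop ℤ) ≤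
        tval (∑ i ∈ Finset.univ.filter (fun i => (f i).eval 1 = l),
          g i * (FQ (f i) ^ m - RatFunc.C ((l : ℚ) ^ m)))

/-- Condition C4. -/
noncomputable def C4cond {n : ℕ} (N : ℕ) (f : Fin n → Polynomial ℤ)
    (g : Fin n → RatFunc ℚ) : Prop :=
  ∀ l : ℤ, Even l → 4 ≤ l → (∃ i, (f i).eval 1 = l) →
    ((N : ℤ) : WithTop ℤ) ≤ tval (∑ i ∈ Finset.univ.filter (fun i => (f i).eval 1 = l), g i)


noncomputable def sigmaStarQ (p k n : ℕ) : ℚ :=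
  ∑ d ∈ n.divisors.filter (fun d => ¬ p ∣ d), (d : ℚ) ^ k

/-- The m-th coefficient (m ≥ 1) a_m(G*_k) = σ*_{k-1}(m) of the p-adic Eisenstein series,
with the convention that it is 0 unless k is an even integer ≥ 4. -/
noncomputable def amstar (p : ℕ) (k : ℤ) (m : ℕ) : ℚ :=
  open scoped Classical in
  if 4 ≤ k ∧ Even k then sigmaStarQ p (k.toNat - 1) m else 0

private lemma eval₂_id' (q : Polynomial ℚ) (x : ℚ) :
    Polynomial.eval₂ (RingHom.id ℚ) x q = q.eval x := by
  rfl

private lemma padic_sum_le {p : ℕ} [Fact p.Prime] {ι : Type*} {s : Finset ι} {F : ι → ℚ} {t : ℚ}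
    (ht : 0 < t) (h : ∀ i ∈ s, padicNorm p (F i) ≤ t) :
    padicNorm p (∑ i ∈ s, F i) ≤ t := by
  rcases s.eq_empty_or_nonempty with hs | hs
  · simp only [hs, Finset.sum_empty, padicNorm.zero]; exact ht.le
  · exact padicNorm.sum_le hs h

private lemma padicNorm_pow' {p : ℕ} [Fact p.Prime] (q : ℚ) (j : ℕ) :
    padicNorm p (q ^ j) = padicNorm p q ^ j := by
  induction j with
  | zero => simp
  | succ j ih => rw [pow_succ, pow_succ, padicNorm.mul, ih]

private lemma padicNorm_inv' {p : ℕ} [Fact p.Prime] (q : ℚ) :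
    padicNorm p q⁻¹ = (padicNorm p q)⁻¹ := by
  rcases eq_or_ne q 0 with rfl | hq
  · simp
  · refine eq_inv_of_mul_eq_one_left ?_
    rw [← padicNorm.mul, inv_mul_cancel₀ hq, padicNorm.one]

private lemma padicNorm_nat_le_one {p : ℕ} [Fact p.Prime] (n : ℕ) :
    padicNorm p (n : ℚ) ≤ 1 := by
  have := padicNorm.of_int (p := p) (n : ℤ)
  simpa using this

private lemma padicNorm_zpow_one {p : ℕ} [Fact p.Prime] {x : ℚ} (hx : padicNorm p x = 1)
    (z : ℤ) : padicNorm p (x ^ z) = 1 := by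
  cases z with
  | ofNat k => rw [Int.ofNat_eq_coe, zpow_natCast, padicNorm_pow', hx, one_pow]
  | negSucc k => rw [zpow_negSucc, padicNorm_inv', padicNorm_pow', hx, one_pow, inv_one]

private lemma padicNorm_int_one {p : ℕ} [Fact p.Prime] {z : ℤ} (hz : z ≠ 0)
    (h : (z.natAbs : ℕ) < p) : padicNorm p (z : ℚ) = 1 := by
  rw [padicNorm.int_eq_one_iff]
  intro hdvd
  have h2 : (p : ℕ) ∣ z.natAbs := Int.natAbs_dvd_natAbs.mpr (by simpa using hdvd)
  have := Nat.le_of_dvd (Int.natAbs_pos.mpr hz) h2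
  omega

/-- a nonzero rational has p-adic norm 1 for all sufficiently large primes -/
private lemma exists_bound_rat_eq {q : ℚ} (hq : q ≠ 0) :
    ∃ P : ℕ, ∀ p : ℕ, p.Prime → P < p → padicNorm p q = 1 := by
  refine ⟨q.num.natAbs + q.den, fun p hp hP => ?_⟩
  haveI : Fact p.Prime := ⟨hp⟩
  have hnum : q.num ≠ 0 := Rat.num_ne_zero.mpr hq
  have hden : (q.den : ℤ) ≠ 0 := by exact_mod_cast q.den_nz
  have h1 : padicNorm p (q.num : ℚ) = 1 := padicNorm_int_one hnum (by omega)
  have h2 : padicNorm p ((q.den : ℤ) : ℚ) = 1 := by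
    refine padicNorm_int_one hden ?_
    simp only [Int.natAbs_natCast]
    omega
  have h3 : ((q.num : ℚ) / ((q.den : ℤ) : ℚ)) = q := by
    push_cast
    exact Rat.num_div_den q
  calc padicNorm p q = padicNorm p ((q.num : ℚ) / ((q.den : ℤ) : ℚ)) := by rw [h3]
    _ = 1 := by rw [padicNorm.div, h1, h2, one_div_one]

private lemma exists_bound_rat_le (q : ℚ) :
    ∃ P : ℕ, ∀ p : ℕ, p.Prime → P < p → padicNorm p q ≤ 1 := by
  rcases eq_or_ne q 0 with rfl | hq
  · exact ⟨0, fun p hp _ => by simp [padicNorm.zero]⟩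
  · obtain ⟨P, hP⟩ := exists_bound_rat_eq hq
    exact ⟨P, fun p hp h => (hP p hp h).le⟩

private lemma exists_bound_poly_le (A : Polynomial ℚ) :
    ∃ P : ℕ, ∀ p : ℕ, p.Prime → P < p → padicNorm p (A.eval (p : ℚ)) ≤ 1 := by
  have h : ∀ i : ℕ, ∃ P : ℕ, ∀ p : ℕ, p.Prime → P < p → padicNorm p (A.coeff i) ≤ 1 :=
    fun i => exists_bound_rat_le _
  choose B hB using h
  refine ⟨(Finset.range (A.natDegree + 1)).sup B, fun p hp hP => ?_⟩
  haveI : Fact p.Prime := ⟨hp⟩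
  rw [Polynomial.eval_eq_sum_range]
  refine padic_sum_le one_pos fun i hi => ?_
  rw [padicNorm.mul]
  have h1 : padicNorm p (A.coeff i) ≤ 1 :=
    hB i p hp (lt_of_le_of_lt (Finset.le_sup hi) hP)
  have h2 : padicNorm p ((p : ℚ) ^ i) ≤ 1 := by
    rw [padicNorm_pow', padicNorm.padicNorm_p hp.one_lt]
    refine pow_le_one₀ (by positivity) ?_
    rw [inv_le_one_iff₀]
    right
    exact_mod_cast hp.one_lt.le
  calc padicNorm p (A.coeff i) * padicNorm p ((p:ℚ)^i) ≤ 1 * 1 :=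
        mul_le_mul h1 h2 (padicNorm.nonneg _) zero_le_one
    _ = 1 := mul_one 1

private lemma exists_bound_poly_eq {A : Polynomial ℚ} (h0 : A.eval 0 ≠ 0) :
    ∃ P : ℕ, ∀ p : ℕ, p.Prime → P < p →
      padicNorm p (A.eval (p : ℚ)) = 1 := by
  obtain ⟨P1, hP1⟩ := exists_bound_poly_le A.divX
  obtain ⟨P2, hP2⟩ := exists_bound_rat_eq (q := A.coeff 0)
    (by rwa [Polynomial.coeff_zero_eq_eval_zero])
  refine ⟨max P1 P2, fun p hp hP => ?_⟩
  haveI : Fact p.Prime := ⟨hp⟩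
  have hkey : A.eval (p : ℚ) = (p : ℚ) * A.divX.eval (p : ℚ) + A.coeff 0 := by
    conv_lhs => rw [← Polynomial.X_mul_divX_add A]
    rw [Polynomial.eval_add, Polynomial.eval_mul, Polynomial.eval_X, Polynomial.eval_C]
  have h1 : padicNorm p ((p : ℚ) * A.divX.eval (p : ℚ)) < 1 := by
    rw [padicNorm.mul, padicNorm.padicNorm_p hp.one_lt]
    have hd : padicNorm p (A.divX.eval (p : ℚ)) ≤ 1 :=
      hP1 p hp (lt_of_le_of_lt (le_max_left _ _) hP)
    have hplt : (1 : ℚ) < (p : ℚ) := by exact_mod_cast hp.one_lt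
    calc (p : ℚ)⁻¹ * padicNorm p (A.divX.eval (p : ℚ)) ≤ (p:ℚ)⁻¹ * 1 := by
          refine mul_le_mul_of_nonneg_left hd (by positivity)
      _ = (p:ℚ)⁻¹ := mul_one _
      _ < 1 := by rw [inv_lt_one_iff₀]; right; exact hplt
  have h2 : padicNorm p (A.coeff 0) = 1 := hP2 p hp (lt_of_le_of_lt (le_max_right _ _) hP)
  rw [hkey, padicNorm.add_eq_max_of_ne (by rw [h2]; exact h1.ne), h2]
  exact max_eq_right h1.le

private lemma exists_bound_poly_ne {B : Polynomial ℚ} (hB : B ≠ 0) :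
    ∃ P : ℕ, ∀ p : ℕ, P < p → B.eval (p : ℚ) ≠ 0 := by
  refine ⟨B.roots.toFinset.sup fun q => ⌈q⌉₊, fun p hP hev => ?_⟩
  have hroot : (p : ℚ) ∈ B.roots.toFinset := by
    rw [Multiset.mem_toFinset, Polynomial.mem_roots hB]
    exact hev
  have h2 := Finset.le_sup (f := fun q : ℚ => ⌈q⌉₊) hroot
  simp only [Nat.ceil_natCast] at h2
  omega

private lemma tval_zero : tval 0 = ⊤ := by simp [tval]

private lemma tval_eq {h : RatFunc ℚ} (hh : h ≠ 0) :
    tval h = (((h.num.rootMultiplicity 0 : ℤ) - (h.denom.rootMultiplicity 0 : ℤ) : ℤ) :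
      WithTop ℤ) := by
  rw [tval, if_neg hh]

private lemma num_ne_zero' {h : RatFunc ℚ} (hh : h ≠ 0) : h.num ≠ 0 :=
  RatFunc.num_ne_zero hh

private lemma tval_mul (a b : RatFunc ℚ) : tval (a * b) = tval a + tval b := by
  rcases eq_or_ne a 0 with rfl | ha
  · simp [tval_zero]
  rcases eq_or_ne b 0 with rfl | hb
  · simp [tval_zero]
  have hab : a * b ≠ 0 := mul_ne_zero ha hb
  have key := RatFunc.num_denom_mul a b
  have h1 : ((a * b).num * (a.denom * b.denom)).rootMultiplicity 0 =
      (a.num * b.num * (a * b).denom).rootMultiplicity 0 := by rw [key]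
  rw [Polynomial.rootMultiplicity_mul
      (mul_ne_zero (num_ne_zero' hab) (mul_ne_zero (RatFunc.denom_ne_zero a)
        (RatFunc.denom_ne_zero b))),
    Polynomial.rootMultiplicity_mul (mul_ne_zero (RatFunc.denom_ne_zero a)
      (RatFunc.denom_ne_zero b)),
    Polynomial.rootMultiplicity_mul (mul_ne_zero (mul_ne_zero (num_ne_zero' ha)
      (num_ne_zero' hb)) (RatFunc.denom_ne_zero (a * b))),
    Polynomial.rootMultiplicity_mul (mul_ne_zero (num_ne_zero' ha) (num_ne_zero' hb))] at h1
  rw [tval_eq hab, tval_eq ha, tval_eq hb, ← WithTop.coe_add, WithTop.coe_inj]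
  omega

private lemma le_tval_add {r : WithTop ℤ} {a b : RatFunc ℚ} (ha : r ≤ tval a)
    (hb : r ≤ tval b) : r ≤ tval (a + b) := by
  rcases eq_or_ne a 0 with rfl | ha0
  · simpa using hb
  rcases eq_or_ne b 0 with rfl | hb0
  · simpa using ha
  rcases eq_or_ne (a + b) 0 with hab | hab
  · rw [hab, tval_zero]; exact le_top
  rcases eq_or_ne r ⊤ with rfl | hr
  · rw [tval_eq ha0] at ha; exact absurd ha (by simp)
  obtain ⟨r', rfl⟩ := WithTop.ne_top_iff_exists.mp hr
  rw [tval_eq ha0, WithTop.coe_le_coe] at ha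
  rw [tval_eq hb0, WithTop.coe_le_coe] at hb
  rw [tval_eq hab, WithTop.coe_le_coe]
  have hS : a.num * b.denom + a.denom * b.num ≠ 0 := by
    intro h0
    have hkey := RatFunc.num_denom_add a b
    rw [h0, zero_mul] at hkey
    rcases mul_eq_zero.mp hkey with h | h
    · exact num_ne_zero' hab h
    · exact mul_ne_zero (RatFunc.denom_ne_zero a) (RatFunc.denom_ne_zero b) h
  have key := RatFunc.num_denom_add a b
  have h1 : ((a + b).num * (a.denom * b.denom)).rootMultiplicity 0 =
      ((a.num * b.denom + a.denom * b.num) * (a + b).denom).rootMultiplicity 0 := by rw [key]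
  rw [Polynomial.rootMultiplicity_mul
      (mul_ne_zero (num_ne_zero' hab) (mul_ne_zero (RatFunc.denom_ne_zero a)
        (RatFunc.denom_ne_zero b))),
    Polynomial.rootMultiplicity_mul (mul_ne_zero (RatFunc.denom_ne_zero a)
      (RatFunc.denom_ne_zero b)),
    Polynomial.rootMultiplicity_mul (mul_ne_zero hS (RatFunc.denom_ne_zero (a+b)))] at h1
  have hmin : (a.num.rootMultiplicity 0 + b.denom.rootMultiplicity 0 ≤
        (a.num * b.denom + a.denom * b.num).rootMultiplicity 0) ∨
      (a.denom.rootMultiplicity 0 + b.num.rootMultiplicity 0 ≤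
        (a.num * b.denom + a.denom * b.num).rootMultiplicity 0) := by
    set μ := min (a.num.rootMultiplicity 0 + b.denom.rootMultiplicity 0)
      (a.denom.rootMultiplicity 0 + b.num.rootMultiplicity 0) with hμ
    have hcase : μ ≤ (a.num * b.denom + a.denom * b.num).rootMultiplicity 0 := by
      rw [Polynomial.le_rootMultiplicity_iff hS]
      have d1 : (Polynomial.X - Polynomial.C (0:ℚ)) ^ μ ∣ a.num * b.denom := by
        rw [← Polynomial.le_rootMultiplicity_iff (mul_ne_zero (num_ne_zero' ha0)
          (RatFunc.denom_ne_zero b)),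
          Polynomial.rootMultiplicity_mul (mul_ne_zero (num_ne_zero' ha0)
          (RatFunc.denom_ne_zero b))]
        exact min_le_left _ _
      have d2 : (Polynomial.X - Polynomial.C (0:ℚ)) ^ μ ∣ a.denom * b.num := by
        rw [← Polynomial.le_rootMultiplicity_iff (mul_ne_zero (RatFunc.denom_ne_zero a)
          (num_ne_zero' hb0)),
          Polynomial.rootMultiplicity_mul (mul_ne_zero (RatFunc.denom_ne_zero a)
          (num_ne_zero' hb0))]
        exact min_le_right _ _
      exact dvd_add d1 d2
    rcases le_total (a.num.rootMultiplicity 0 + b.denom.rootMultiplicity 0)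
        (a.denom.rootMultiplicity 0 + b.num.rootMultiplicity 0) with h | h
    · left; rw [hμ, min_eq_left h] at hcase; exact hcase
    · right; rw [hμ, min_eq_right h] at hcase; exact hcase
  omega

private lemma tval_sum {ι : Type*} (s : Finset ι) (w : ι → RatFunc ℚ) {r : WithTop ℤ}
    (h : ∀ i ∈ s, r ≤ tval (w i)) : r ≤ tval (∑ i ∈ s, w i) := by
  induction s using Finset.cons_induction with
  | empty => rw [Finset.sum_empty, tval_zero]; exact le_top
  | cons a s ha ih =>
    rw [Finset.sum_cons]
    exact le_tval_add (h a (Finset.mem_cons_self a s))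
      (ih fun i hi => h i (Finset.mem_cons_of_mem hi))

private lemma tval_polynomial (q : Polynomial ℚ) :
    (0 : WithTop ℤ) ≤ tval (algebraMap (Polynomial ℚ) (RatFunc ℚ) q) := by
  rcases eq_or_ne q 0 with rfl | hq
  · rw [map_zero, tval_zero]; exact le_top
  have hq' : algebraMap (Polynomial ℚ) (RatFunc ℚ) q ≠ 0 := by
    simpa using RatFunc.algebraMap_ne_zero hq
  rw [tval_eq hq', RatFunc.num_algebraMap, RatFunc.denom_algebraMap]
  have : Polynomial.rootMultiplicity (0:ℚ) 1 = 0 :=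
    Polynomial.rootMultiplicity_eq_zero (by simp [Polynomial.IsRoot])
  rw [this, Nat.cast_zero, sub_zero]
  exact_mod_cast Int.natCast_nonneg _

private lemma tval_mul_ge {r : WithTop ℤ} {a b : RatFunc ℚ} (ha : r ≤ tval a)
    (hb : (0 : WithTop ℤ) ≤ tval b) : r ≤ tval (a * b) := by
  rw [tval_mul]
  calc r = r + 0 := (add_zero r).symm
    _ ≤ tval a + tval b := add_le_add ha hb

private lemma tval_eq' {h : RatFunc ℚ} (hh : h ≠ 0) :
    tval h = (((h.num.rootMultiplicity 0 : ℤ) - (h.denom.rootMultiplicity 0 : ℤ) : ℤ) :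
      WithTop ℤ) := by
  rw [tval, if_neg hh]

/-- The bridge lemma: t-adic valuation lower bounds give p-adic norm upper bounds on values
at large primes, together with nonvanishing of the denominator. -/
private lemma bridge {h : RatFunc ℚ} {r : ℤ} (hr : (r : WithTop ℤ) ≤ tval h) :
    ∃ P : ℕ, ∀ p : ℕ, p.Prime → P < p →
      padicNorm p (gval p h) ≤ (p : ℚ) ^ (-r) ∧ h.denom.eval (p : ℚ) ≠ 0 := by
  rcases eq_or_ne h 0 with rfl | hh
  · refine ⟨0, fun p hp _ => ?_⟩
    haveI : Fact p.Prime := ⟨hp⟩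
    have hp0 : (0:ℚ) < (p:ℚ) := by exact_mod_cast hp.pos
    constructor
    · rw [gval, RatFunc.eval_zero, padicNorm.zero]
      positivity
    · rw [RatFunc.denom_zero, Polynomial.eval_one]
      exact one_ne_zero
  · set a := h.num.rootMultiplicity 0 with hadef
    set b := h.denom.rootMultiplicity 0 with hbdef
    have hr' : r ≤ (a : ℤ) - (b : ℤ) := by
      rw [tval_eq' hh, WithTop.coe_le_coe] at hr; exact hr
    set A := h.num /ₘ (Polynomial.X - Polynomial.C (0:ℚ)) ^ a with hAdef
    set B := h.denom /ₘ (Polynomial.X - Polynomial.C (0:ℚ)) ^ b with hBdef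
    have hnum : (Polynomial.X - Polynomial.C (0:ℚ)) ^ a * A = h.num :=
      Polynomial.pow_mul_divByMonic_rootMultiplicity_eq h.num 0
    have hden : (Polynomial.X - Polynomial.C (0:ℚ)) ^ b * B = h.denom :=
      Polynomial.pow_mul_divByMonic_rootMultiplicity_eq h.denom 0
    have hB0 : B.eval 0 ≠ 0 :=
      Polynomial.eval_divByMonic_pow_rootMultiplicity_ne_zero 0 (RatFunc.denom_ne_zero h)
    obtain ⟨P1, hP1⟩ := exists_bound_poly_le A
    obtain ⟨P2, hP2⟩ := exists_bound_poly_eq hB0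
    refine ⟨max P1 P2, fun p hp hP => ?_⟩
    haveI : Fact p.Prime := ⟨hp⟩
    have hp0 : (0:ℚ) < (p:ℚ) := by exact_mod_cast hp.pos
    have hp1 : (1:ℚ) < (p:ℚ) := by exact_mod_cast hp.one_lt
    have hA := hP1 p hp (lt_of_le_of_lt (le_max_left _ _) hP)
    have hB := hP2 p hp (lt_of_le_of_lt (le_max_right _ _) hP)
    have hBne : B.eval (p:ℚ) ≠ 0 := by
      intro h0; rw [h0, padicNorm.zero] at hB; exact one_ne_zero hB.symm
    have hnumev : h.num.eval (p:ℚ) = (p:ℚ) ^ a * A.eval (p:ℚ) := by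
      rw [← hnum]; simp
    have hdenev : h.denom.eval (p:ℚ) = (p:ℚ) ^ b * B.eval (p:ℚ) := by
      rw [← hden]; simp
    have hdenne : h.denom.eval (p:ℚ) ≠ 0 := by
      rw [hdenev]; exact mul_ne_zero (by positivity) hBne
    refine ⟨?_, hdenne⟩
    have hgv : gval p h = h.num.eval (p:ℚ) / h.denom.eval (p:ℚ) := by
      rw [gval, RatFunc.eval, eval₂_id', eval₂_id']
    have hnp : padicNorm p ((p:ℚ)) = (p:ℚ)⁻¹ := padicNorm.padicNorm_p hp.one_lt
    have e1 : padicNorm p (h.num.eval (p:ℚ)) =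
        (p:ℚ) ^ (-(a:ℤ)) * padicNorm p (A.eval (p:ℚ)) := by
      rw [hnumev, padicNorm.mul, padicNorm_pow', hnp, inv_pow, ← zpow_natCast, ← zpow_neg]
    have e2 : padicNorm p (h.denom.eval (p:ℚ)) = (p:ℚ) ^ (-(b:ℤ)) := by
      rw [hdenev, padicNorm.mul, padicNorm_pow', hnp, hB, mul_one, inv_pow, ← zpow_natCast,
        ← zpow_neg]
    calc padicNorm p (gval p h)
        = padicNorm p (h.num.eval (p:ℚ)) / padicNorm p (h.denom.eval (p:ℚ)) := by
          rw [hgv, padicNorm.div]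
      _ = (p:ℚ) ^ ((b:ℤ) - (a:ℤ)) * padicNorm p (A.eval (p:ℚ)) := by
          have hzz : ∀ (u v : ℤ) (c : ℚ), ((p:ℚ)^u * c) / ((p:ℚ)^v) = (p:ℚ)^(u - v) * c := by
            intro u v c
            rw [zpow_sub₀ hp0.ne', div_eq_mul_inv, div_eq_mul_inv]
            ring
          rw [e1, e2, hzz, show -(a:ℤ) - -(b:ℤ) = (b:ℤ) - a by ring]
      _ ≤ (p:ℚ) ^ ((b:ℤ) - (a:ℤ)) * 1 := by
          exact mul_le_mul_of_nonneg_left hA (by positivity)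
      _ = (p:ℚ) ^ ((b:ℤ) - (a:ℤ)) := mul_one _
      _ ≤ (p:ℚ) ^ (-r) := zpow_le_zpow_right₀ hp1.le (by omega)


private lemma poly_growth (q : Polynomial ℤ) (hd : 0 < q.natDegree) (hl : 0 < q.leadingCoeff)
    (C : ℤ) : ∃ P : ℕ, ∀ p : ℕ, P < p → C ≤ q.eval (p : ℤ) := by
  set Q : Polynomial ℝ := q.map (Int.castRingHom ℝ) with hQ
  have hinj : Function.Injective (Int.castRingHom ℝ) := fun x y h => by
    have : (x : ℝ) = (y : ℝ) := h
    exact_mod_cast this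
  have hdeg : 0 < Q.degree := by
    rw [Polynomial.degree_map_eq_of_injective hinj]
    rw [← Polynomial.natDegree_pos_iff_degree_pos]
    exact hd
  have hlc : 0 ≤ Q.leadingCoeff := by
    rw [Polynomial.leadingCoeff_map_of_injective hinj]
    show (0:ℝ) ≤ (q.leadingCoeff : ℝ)
    exact_mod_cast hl.le
  have htend := Polynomial.tendsto_atTop_of_leadingCoeff_nonneg Q hdeg hlc
  have hev := htend.eventually_ge_atTop (C : ℝ)
  obtain ⟨x0, hx0⟩ := Filter.eventually_atTop.mp hev
  refine ⟨⌈x0⌉₊, fun p hP => ?_⟩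
  have hx : x0 ≤ (p : ℝ) := by
    calc x0 ≤ (⌈x0⌉₊ : ℝ) := Nat.le_ceil x0
      _ ≤ (p : ℝ) := by exact_mod_cast hP.le
  have h1 : (C : ℝ) ≤ Q.eval (p : ℝ) := hx0 _ hx
  have h2 : Q.eval (p : ℝ) = ((q.eval (p : ℤ) : ℤ) : ℝ) := by
    have h3 : (p:ℝ) = (Int.castRingHom ℝ) ((p:ℕ):ℤ) := by simp
    rw [hQ, Polynomial.eval_map, h3, Polynomial.eval₂_at_apply]
    rfl
  rw [h2] at h1
  exact_mod_cast h1

private lemma denom_eval_ne_of_dvd {x : ℚ} {a b : Polynomial ℚ} (hdvd : a ∣ b)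
    (hb : b.eval x ≠ 0) : a.eval x ≠ 0 :=
  fun h0 => hb (Polynomial.eval_eq_zero_of_dvd_of_eval_eq_zero hdvd h0)

private lemma eval_sum' {ι : Type*} (s : Finset ι) (w : ι → RatFunc ℚ) (x : ℚ)
    (hd : ∀ i ∈ s, (w i).denom.eval x ≠ 0) :
    (∑ i ∈ s, w i).denom.eval x ≠ 0 ∧
      RatFunc.eval (RingHom.id ℚ) x (∑ i ∈ s, w i) =
        ∑ i ∈ s, RatFunc.eval (RingHom.id ℚ) x (w i) := by
  classical
  induction s using Finset.cons_induction with
  | empty =>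
    refine ⟨?_, by simp⟩
    rw [Finset.sum_empty, RatFunc.denom_zero, Polynomial.eval_one]
    exact one_ne_zero
  | cons a s ha ih =>
    have hda := hd a (Finset.mem_cons_self a s)
    obtain ⟨hds, hev⟩ := ih fun i hi => hd i (Finset.mem_cons_of_mem hi)
    have hdvd : (w a + ∑ i ∈ s, w i).denom ∣ (w a).denom * (∑ i ∈ s, w i).denom :=
      RatFunc.denom_add_dvd _ _
    have hne : (w a + ∑ i ∈ s, w i).denom.eval x ≠ 0 :=
      denom_eval_ne_of_dvd hdvd (by rw [Polynomial.eval_mul]; exact mul_ne_zero hda hds)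
    have he2 : ∀ q : Polynomial ℚ, Polynomial.eval₂ (RingHom.id ℚ) x q = q.eval x :=
      fun q => rfl
    have hda' : Polynomial.eval₂ (RingHom.id ℚ) x (w a).denom ≠ 0 := by
      rw [he2]; exact hda
    have hds' : Polynomial.eval₂ (RingHom.id ℚ) x (∑ i ∈ s, w i).denom ≠ 0 := by
      rw [he2]; exact hds
    rw [Finset.sum_cons]
    refine ⟨hne, ?_⟩
    rw [RatFunc.eval_add _ _ hda' hds', hev, Finset.sum_cons]

private lemma eval_mul_poly (h : RatFunc ℚ) (q : Polynomial ℚ) (x : ℚ)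
    (hd : h.denom.eval x ≠ 0) :
    RatFunc.eval (RingHom.id ℚ) x (h * algebraMap (Polynomial ℚ) (RatFunc ℚ) q) =
      RatFunc.eval (RingHom.id ℚ) x h * q.eval x ∧
    (h * algebraMap (Polynomial ℚ) (RatFunc ℚ) q).denom.eval x ≠ 0 := by
  have he2 : ∀ r : Polynomial ℚ, Polynomial.eval₂ (RingHom.id ℚ) x r = r.eval x :=
    fun r => rfl
  have hdq : (algebraMap (Polynomial ℚ) (RatFunc ℚ) q).denom.eval x ≠ 0 := by
    rw [RatFunc.denom_algebraMap, Polynomial.eval_one]; exact one_ne_zero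
  have hd' : Polynomial.eval₂ (RingHom.id ℚ) x h.denom ≠ 0 := by rw [he2]; exact hd
  have hdq' : Polynomial.eval₂ (RingHom.id ℚ) x
      ((algebraMap (Polynomial ℚ) (RatFunc ℚ)) q).denom ≠ 0 := by rw [he2]; exact hdq
  constructor
  · rw [RatFunc.eval_mul _ _ hd' hdq']
    congr 1
    rw [RatFunc.eval_algebraMap]
    have : algebraMap (Polynomial ℚ) (Polynomial ℚ) q = q := by
      simp [Algebra.algebraMap_self_apply]
    rw [this, he2]
  · exact denom_eval_ne_of_dvd (RatFunc.denom_mul_dvd _ _)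
      (by rw [RatFunc.denom_algebraMap]; simpa using hd)

private lemma fermat_quot {p d : ℕ} (hp : p.Prime) (hd : ¬ p ∣ d) :
    ∃ c : ℤ, (d : ℤ) ^ (p - 1) = 1 + (p : ℤ) * c := by
  have hco : IsCoprime ((d : ℤ)) ((p : ℤ)) := by
    rw [Int.isCoprime_iff_gcd_eq_one, Int.gcd_natCast_natCast]
    exact (Nat.coprime_comm.mp ((Nat.Prime.coprime_iff_not_dvd hp).mpr hd))
  have := Int.ModEq.pow_card_sub_one_eq_one hp hco
  have hdvd : ((p:ℕ) : ℤ) ∣ 1 - (d : ℤ) ^ (p - 1) := Int.ModEq.dvd this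
  obtain ⟨c, hc⟩ := hdvd
  exact ⟨-c, by rw [mul_neg, ← hc]; ring⟩

private lemma choose_cast_eq (e j : ℕ) :
    ((e.choose j : ℕ) : ℚ) = (descPochhammer ℚ j).eval (e : ℚ) * ((j.factorial : ℚ))⁻¹ := by
  have h1 := descPochhammer_eval_eq_descFactorial ℚ e j
  have h2 : (e.descFactorial j : ℚ) = (j.factorial : ℚ) * (e.choose j : ℚ) := by
    exact_mod_cast congrArg (Nat.cast (R := ℚ)) (Nat.descFactorial_eq_factorial_mul_choose e j)
  rw [h1, h2]
  have hfac : (j.factorial : ℚ) ≠ 0 := by exact_mod_cast j.factorial_ne_zero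
  field_simp

private lemma one_add_pow_eq (x : ℚ) (e B : ℕ) (h : e < B) :
    (1 + x) ^ e = ∑ j ∈ Finset.range B, x ^ j * (e.choose j : ℚ) := by
  rw [add_comm, add_pow]
  rw [← Finset.sum_subset (Finset.range_subset_range.mpr (by omega : e + 1 ≤ B))]
  · exact Finset.sum_congr rfl fun j hj => by rw [one_pow, mul_one]
  · intro j hj hj'
    have : e < j := by
      simp only [Finset.mem_range] at hj hj'
      omega
    rw [Nat.choose_eq_zero_of_lt this]
    simp

private lemma descPochhammer_coeff_norm {p : ℕ} [Fact p.Prime] (j k : ℕ) :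
    padicNorm p ((descPochhammer ℚ j).coeff k) ≤ 1 := by
  have h1 : descPochhammer ℚ j = (descPochhammer ℤ j).map (Int.castRingHom ℚ) :=
    (descPochhammer_map (Int.castRingHom ℚ) j).symm
  rw [h1, Polynomial.coeff_map]
  exact padicNorm.of_int _

private lemma dpow_decomp {p d : ℕ} {k l c : ℤ} (hp : 2 ≤ p) (hd : 1 ≤ d)
    (hk : k - l = ((p : ℤ) - 1) * c) (hc : 0 ≤ c) (hk4 : 4 ≤ k) :
    (d : ℚ) ^ (k.toNat - 1 : ℕ) =
      (d : ℚ) ^ ((l - 1 : ℤ)) * (((d : ℚ) ^ (p - 1 : ℕ)) ^ (c.toNat : ℕ)) := by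
  have hd0 : (d : ℚ) ≠ 0 := by positivity
  have h1 : ((k.toNat - 1 : ℕ) : ℤ) = k - 1 := by omega
  have h2 : (d : ℚ) ^ (k.toNat - 1 : ℕ) = (d : ℚ) ^ ((k - 1 : ℤ)) := by
    rw [← h1, zpow_natCast]
  have h3 : k - 1 = (l - 1) + ((p : ℤ) - 1) * c := by omega
  rw [h2, h3, zpow_add₀ hd0, zpow_mul]
  congr 1
  have h4 : ((p - 1 : ℕ) : ℤ) = (p : ℤ) - 1 := by omega
  have h5 : (d : ℚ) ^ ((p : ℤ) - 1) = (d : ℚ) ^ (p - 1 : ℕ) := by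
    rw [← h4, zpow_natCast]
  rw [h5, ← zpow_natCast ((d : ℚ) ^ (p - 1 : ℕ)) c.toNat]
  congr 1
  omega


private lemma Mval_le_tval_term {n : ℕ} (g : Fin n → RatFunc ℚ) (i : Fin n) :
    Mval g ≤ tval (g i) := by
  rw [Mval]; exact Finset.inf_le (Finset.mem_univ i)

private lemma notsmall {n N : ℕ} {g : Fin n → RatFunc ℚ} {j : ℕ}
    (hj : ¬ ((j : ℤ) : WithTop ℤ) + Mval g ≤ ((N : ℤ) : WithTop ℤ)) :
    (((N : ℤ) - (j : ℤ) : ℤ) : WithTop ℤ) ≤ Mval g := by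
  rcases eq_or_ne (Mval g) ⊤ with hM | hM
  · rw [hM]; exact le_top
  · obtain ⟨M, hM'⟩ := WithTop.ne_top_iff_exists.mp hM
    rw [← hM'] at hj ⊢
    rw [WithTop.coe_le_coe]
    have h1 : ((N : ℤ) : WithTop ℤ) < ((j : ℤ) : WithTop ℤ) + (M : WithTop ℤ) := not_le.mp hj
    rw [← WithTop.coe_add, WithTop.coe_lt_coe] at h1
    omega

private lemma tval_FQpow {q : Polynomial ℤ} (j : ℕ) : (0 : WithTop ℤ) ≤ tval (FQ q ^ j) := by
  rw [FQ, ← map_pow]; exact tval_polynomial _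

private lemma tval_FQpow_sub_C {q : Polynomial ℤ} (j : ℕ) (c : ℚ) :
    (0 : WithTop ℤ) ≤ tval (FQ q ^ j - RatFunc.C c) := by
  have h1 : FQ q ^ j - RatFunc.C c = algebraMap (Polynomial ℚ) (RatFunc ℚ)
      ((q.map (Int.castRingHom ℚ)) ^ j - Polynomial.C c) := by
    rw [map_sub, map_pow, RatFunc.algebraMap_C, FQ]
  rw [h1]; exact tval_polynomial _

private lemma Tbound {n N : ℕ} {f : Fin n → Polynomial ℤ} {g : Fin n → RatFunc ℚ}
    (hC2 : C2cond N f g) {l : ℤ} (hev : Even l) (hl2 : l ≤ 2)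
    (hex : ∃ i, (f i).eval 1 = l) (j : ℕ) :
    (((N : ℤ) - (j : ℤ) : ℤ) : WithTop ℤ) ≤
      tval (∑ i ∈ Finset.univ.filter (fun i => (f i).eval 1 = l), g i * FQ (f i) ^ j) := by
  by_cases hj : ((j : ℤ) : WithTop ℤ) + Mval g ≤ ((N : ℤ) : WithTop ℤ)
  · exact hC2 l hev hl2 hex j hj
  · refine tval_sum _ _ fun i _ => ?_
    refine le_trans (notsmall hj) (le_trans (Mval_le_tval_term g i) ?_)
    exact tval_mul_ge le_rfl (tval_FQpow j)

private lemma Ubound {n N : ℕ} {f : Fin n → Polynomial ℤ} {g : Fin n → RatFunc ℚ}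
    (hC3 : C3cond N f g) {l : ℤ} (hev : Even l) (hl4 : 4 ≤ l)
    (hex : ∃ i, (f i).eval 1 = l) (j : ℕ) (hj1 : 1 ≤ j) :
    (((N : ℤ) - (j : ℤ) : ℤ) : WithTop ℤ) ≤
      tval (∑ i ∈ Finset.univ.filter (fun i => (f i).eval 1 = l),
        g i * (FQ (f i) ^ j - RatFunc.C ((l : ℚ) ^ j))) := by
  by_cases hj : ((j : ℤ) : WithTop ℤ) + Mval g ≤ ((N : ℤ) : WithTop ℤ)
  · exact hC3 l hev hl4 hex j hj1 hj
  · refine tval_sum _ _ fun i _ => ?_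
    refine le_trans (notsmall hj) (le_trans (Mval_le_tval_term g i) ?_)
    exact tval_mul_ge le_rfl (tval_FQpow_sub_C j _)

private lemma key_tval {n N : ℕ} {f : Fin n → Polynomial ℤ} {g : Fin n → RatFunc ℚ}
    (hC2 : C2cond N f g) (hC3 : C3cond N f g) (hC4 : C4cond N f g)
    (l : ℤ) (hev : Even l) (hex : ∃ i, (f i).eval 1 = l) (k : ℕ) :
    (((N : ℤ) - (k : ℤ) : ℤ) : WithTop ℤ) ≤
      tval (∑ i ∈ Finset.univ.filter (fun i => (f i).eval 1 = l),
        g i * (FQ (f i) - RatFunc.C (l : ℚ)) ^ k) := by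
  rcases le_or_gt l 2 with hl2 | hl3
  · have expand : ∀ i : Fin n, (FQ (f i) - RatFunc.C (l : ℚ)) ^ k =
        ∑ j ∈ Finset.range (k + 1), FQ (f i) ^ j *
          ((- RatFunc.C (l : ℚ)) ^ (k - j) * ((k.choose j : ℕ) : RatFunc ℚ)) := by
      intro i
      rw [sub_eq_add_neg, add_pow]
      exact Finset.sum_congr rfl fun j _ => by ring
    have hswap : ∑ i ∈ Finset.univ.filter (fun i => (f i).eval 1 = l),
        g i * (FQ (f i) - RatFunc.C (l : ℚ)) ^ k =
        ∑ j ∈ Finset.range (k + 1),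
          (∑ i ∈ Finset.univ.filter (fun i => (f i).eval 1 = l), g i * FQ (f i) ^ j) *
            ((- RatFunc.C (l : ℚ)) ^ (k - j) * ((k.choose j : ℕ) : RatFunc ℚ)) := by
      calc ∑ i ∈ Finset.univ.filter (fun i => (f i).eval 1 = l),
            g i * (FQ (f i) - RatFunc.C (l : ℚ)) ^ k
          = ∑ i ∈ Finset.univ.filter (fun i => (f i).eval 1 = l),
            ∑ j ∈ Finset.range (k + 1), (g i * FQ (f i) ^ j) *
              ((- RatFunc.C (l : ℚ)) ^ (k - j) * ((k.choose j : ℕ) : RatFunc ℚ)) := by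
            refine Finset.sum_congr rfl fun i _ => ?_
            rw [expand i, Finset.mul_sum]
            exact Finset.sum_congr rfl fun j _ => by ring
        _ = ∑ j ∈ Finset.range (k + 1),
            ∑ i ∈ Finset.univ.filter (fun i => (f i).eval 1 = l), (g i * FQ (f i) ^ j) *
              ((- RatFunc.C (l : ℚ)) ^ (k - j) * ((k.choose j : ℕ) : RatFunc ℚ)) :=
            Finset.sum_comm
        _ = _ := Finset.sum_congr rfl fun j _ => by rw [Finset.sum_mul]
    rw [hswap]
    refine tval_sum _ _ fun j hj => ?_
    have hjk : j ≤ k := by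
      simp only [Finset.mem_range] at hj; omega
    have h2 : (0 : WithTop ℤ) ≤ tval ((- RatFunc.C (l : ℚ)) ^ (k - j) *
        ((k.choose j : ℕ) : RatFunc ℚ)) := by
      have hrw : (- RatFunc.C (l : ℚ)) ^ (k - j) * ((k.choose j : ℕ) : RatFunc ℚ)
          = algebraMap (Polynomial ℚ) (RatFunc ℚ)
            ((- Polynomial.C (l : ℚ)) ^ (k - j) * ((k.choose j : ℕ) : Polynomial ℚ)) := by
        rw [map_mul, map_pow, map_neg, RatFunc.algebraMap_C, map_natCast]
      rw [hrw]; exact tval_polynomial _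
    refine le_trans ?_ (tval_mul_ge (Tbound hC2 hev hl2 hex j) h2)
    exact WithTop.coe_le_coe.mpr (by omega)
  · have hl4 : 4 ≤ l := by obtain ⟨t, rfl⟩ := hev; omega
    rcases Nat.eq_zero_or_pos k with rfl | hk
    · have h0 := hC4 l hev hl4 hex
      simpa using h0
    · have e2 : ∑ j ∈ Finset.range (k + 1), RatFunc.C ((l : ℚ) ^ j) *
          ((- RatFunc.C (l : ℚ)) ^ (k - j) * ((k.choose j : ℕ) : RatFunc ℚ)) = 0 := by
        have h0 := add_pow (RatFunc.C (l : ℚ)) (- RatFunc.C (l : ℚ)) k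
        rw [add_neg_cancel, zero_pow (by omega : k ≠ 0)] at h0
        calc ∑ j ∈ Finset.range (k + 1), RatFunc.C ((l : ℚ) ^ j) *
              ((- RatFunc.C (l : ℚ)) ^ (k - j) * ((k.choose j : ℕ) : RatFunc ℚ))
            = ∑ j ∈ Finset.range (k + 1), RatFunc.C (l : ℚ) ^ j *
              (- RatFunc.C (l : ℚ)) ^ (k - j) * ((k.choose j : ℕ) : RatFunc ℚ) := by
              refine Finset.sum_congr rfl fun j _ => ?_
              rw [← map_pow]
              ring
          _ = 0 := h0.symm
      have expand : ∀ i : Fin n, (FQ (f i) - RatFunc.C (l : ℚ)) ^ k =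
          ∑ j ∈ Finset.range (k + 1), (FQ (f i) ^ j - RatFunc.C ((l : ℚ) ^ j)) *
            ((- RatFunc.C (l : ℚ)) ^ (k - j) * ((k.choose j : ℕ) : RatFunc ℚ)) := by
        intro i
        have e1 : ∑ j ∈ Finset.range (k + 1), FQ (f i) ^ j *
            ((- RatFunc.C (l : ℚ)) ^ (k - j) * ((k.choose j : ℕ) : RatFunc ℚ))
            = (FQ (f i) - RatFunc.C (l : ℚ)) ^ k := by
          rw [sub_eq_add_neg, add_pow]
          exact Finset.sum_congr rfl fun j _ => by ring
        have e3 : ∑ j ∈ Finset.range (k + 1), (FQ (f i) ^ j - RatFunc.C ((l : ℚ) ^ j)) *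
            ((- RatFunc.C (l : ℚ)) ^ (k - j) * ((k.choose j : ℕ) : RatFunc ℚ))
            = (∑ j ∈ Finset.range (k + 1), FQ (f i) ^ j *
              ((- RatFunc.C (l : ℚ)) ^ (k - j) * ((k.choose j : ℕ) : RatFunc ℚ)))
            - ∑ j ∈ Finset.range (k + 1), RatFunc.C ((l : ℚ) ^ j) *
              ((- RatFunc.C (l : ℚ)) ^ (k - j) * ((k.choose j : ℕ) : RatFunc ℚ)) := by
          rw [← Finset.sum_sub_distrib]
          exact Finset.sum_congr rfl fun j _ => by ring
        rw [e3, e1, e2, sub_zero]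
      have hswap : ∑ i ∈ Finset.univ.filter (fun i => (f i).eval 1 = l),
          g i * (FQ (f i) - RatFunc.C (l : ℚ)) ^ k =
          ∑ j ∈ Finset.range (k + 1),
            (∑ i ∈ Finset.univ.filter (fun i => (f i).eval 1 = l),
              g i * (FQ (f i) ^ j - RatFunc.C ((l : ℚ) ^ j))) *
              ((- RatFunc.C (l : ℚ)) ^ (k - j) * ((k.choose j : ℕ) : RatFunc ℚ)) := by
        calc ∑ i ∈ Finset.univ.filter (fun i => (f i).eval 1 = l),
              g i * (FQ (f i) - RatFunc.C (l : ℚ)) ^ k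
            = ∑ i ∈ Finset.univ.filter (fun i => (f i).eval 1 = l),
              ∑ j ∈ Finset.range (k + 1), (g i * (FQ (f i) ^ j - RatFunc.C ((l : ℚ) ^ j))) *
                ((- RatFunc.C (l : ℚ)) ^ (k - j) * ((k.choose j : ℕ) : RatFunc ℚ)) := by
              refine Finset.sum_congr rfl fun i _ => ?_
              rw [expand i, Finset.mul_sum]
              exact Finset.sum_congr rfl fun j _ => by ring
          _ = ∑ j ∈ Finset.range (k + 1),
              ∑ i ∈ Finset.univ.filter (fun i => (f i).eval 1 = l),
                (g i * (FQ (f i) ^ j - RatFunc.C ((l : ℚ) ^ j))) *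
                ((- RatFunc.C (l : ℚ)) ^ (k - j) * ((k.choose j : ℕ) : RatFunc ℚ)) :=
              Finset.sum_comm
          _ = _ := Finset.sum_congr rfl fun j _ => by rw [Finset.sum_mul]
      rw [hswap]
      refine tval_sum _ _ fun j hj => ?_
      have hjk : j ≤ k := by simp only [Finset.mem_range] at hj; omega
      rcases Nat.eq_zero_or_pos j with rfl | hj1
      · have hzero : (∑ i ∈ Finset.univ.filter (fun i => (f i).eval 1 = l),
            g i * (FQ (f i) ^ 0 - RatFunc.C ((l : ℚ) ^ 0))) *
            ((- RatFunc.C (l : ℚ)) ^ (k - 0) * ((k.choose 0 : ℕ) : RatFunc ℚ)) = 0 := by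
          simp
        rw [hzero, tval_zero]
        exact le_top
      · have h2 : (0 : WithTop ℤ) ≤ tval ((- RatFunc.C (l : ℚ)) ^ (k - j) *
            ((k.choose j : ℕ) : RatFunc ℚ)) := by
          have hrw : (- RatFunc.C (l : ℚ)) ^ (k - j) * ((k.choose j : ℕ) : RatFunc ℚ)
              = algebraMap (Polynomial ℚ) (RatFunc ℚ)
                ((- Polynomial.C (l : ℚ)) ^ (k - j) * ((k.choose j : ℕ) : Polynomial ℚ)) := by
            rw [map_mul, map_pow, map_neg, RatFunc.algebraMap_C, map_natCast]
          rw [hrw]; exact tval_polynomial _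
        refine le_trans ?_ (tval_mul_ge (Ubound hC3 hev hl4 hex j hj1) h2)
        exact WithTop.coe_le_coe.mpr (by omega)


theorem statement6 (N : ℕ) (hN : 0 < N) (n : ℕ) (f : Fin n → Polynomial ℤ)
    (hdeg : ∀ i, 0 < (f i).natDegree) (hlc : ∀ i, 0 < (f i).leadingCoeff)
    (g : Fin n → RatFunc ℚ)
    (hC2 : C2cond N f g) (hC3 : C3cond N f g) (hC4 : C4cond N f g) :
    ∃ P : ℕ, 0 < P ∧ ∀ p : ℕ, p.Prime → P < p →
      ∀ m : ℕ, 1 ≤ m →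
        padicNorm p (∑ i, gval p (g i) * amstar p ((f i).eval (p : ℤ)) m)
          ≤ (p : ℚ) ^ (-(N : ℤ)) := by
  classical
  -- integer lower bounds for the valuations of the g i
  set ρ : Fin n → ℤ := fun i => if hgi : g i = 0 then 0 else
    (((g i).num.rootMultiplicity 0 : ℤ) - ((g i).denom.rootMultiplicity 0 : ℤ)) with hρdef
  have hρ_eq : ∀ i, g i ≠ 0 → tval (g i) = ((ρ i : ℤ) : WithTop ℤ) := by
    intro i hi
    rw [tval_eq hi, hρdef]
    simp [hi]
  have hρ_tval : ∀ i, ((ρ i : ℤ) : WithTop ℤ) ≤ tval (g i) := by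
    intro i
    by_cases hi : g i = 0
    · rw [hi, tval_zero]; exact le_top
    · rw [hρ_eq i hi]
  -- the threshold J
  set J : ℕ := N + (∑ i, (ρ i).natAbs) with hJdef
  have hMval : ((-(∑ i, ((ρ i).natAbs : ℤ)) : ℤ) : WithTop ℤ) ≤ Mval g := by
    rw [Mval]
    refine Finset.le_inf fun i _ => le_trans ?_ (hρ_tval i)
    rw [WithTop.coe_le_coe]
    have h1 : ((ρ i).natAbs : ℤ) ≤ ∑ i', ((ρ i').natAbs : ℤ) :=
      Finset.single_le_sum (f := fun i' => ((ρ i').natAbs : ℤ))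
        (fun i' _ => by positivity) (Finset.mem_univ i)
    omega
  have smallj : ∀ j : ℕ, ((j : ℤ) : WithTop ℤ) + Mval g ≤ ((N : ℤ) : WithTop ℤ) → j ≤ J := by
    intro j hj
    have h2 : ((j : ℤ) : WithTop ℤ) + ((-(∑ i, ((ρ i).natAbs : ℤ)) : ℤ) : WithTop ℤ) ≤
        ((N : ℤ) : WithTop ℤ) := le_trans (add_le_add_right hMval _) hj
    rw [← WithTop.coe_add, WithTop.coe_le_coe] at h2
    have h3 : ((∑ i, (ρ i).natAbs : ℕ) : ℤ) = ∑ i, ((ρ i).natAbs : ℤ) := by push_cast; rfl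
    omega
  -- bridge bounds for the g i
  have hgB : ∀ i, ∃ P, ∀ p : ℕ, p.Prime → P < p →
      padicNorm p (gval p (g i)) ≤ (p : ℚ) ^ (-(ρ i)) ∧ (g i).denom.eval (p : ℚ) ≠ 0 :=
    fun i => bridge (hρ_tval i)
  choose Pg hPg using hgB
  -- bridge bounds for the auxiliary rational functions H l k
  have hHB : ∀ l : ℤ, ∀ k : ℕ, ∃ P, Even l → (∃ i, (f i).eval 1 = l) →
      ∀ p : ℕ, p.Prime → P < p →
        padicNorm p (gval p (∑ i ∈ Finset.univ.filter (fun i => (f i).eval 1 = l),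
          g i * (FQ (f i) - RatFunc.C (l : ℚ)) ^ k)) ≤ (p : ℚ) ^ (-((N : ℤ) - (k : ℤ))) := by
    intro l k
    by_cases h : Even l ∧ (∃ i, (f i).eval 1 = l)
    · obtain ⟨P, hP⟩ := bridge (key_tval hC2 hC3 hC4 l h.1 h.2 k)
      exact ⟨P, fun _ _ p hp hPp => (hP p hp hPp).1⟩
    · exact ⟨0, fun h1 h2 => absurd ⟨h1, h2⟩ h⟩
  choose PH hPH using hHB
  -- growth bounds
  have hgrow : ∀ i, ∃ P, ∀ p : ℕ, P < p →
      4 + (((f i).eval 1).natAbs : ℤ) ≤ (f i).eval (p : ℤ) :=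
    fun i => poly_growth (f i) (hdeg i) (hlc i) _
  choose Pf hPf using hgrow
  -- the final bound
  refine ⟨2 + J + (∑ i, Pg i) + (∑ i, Pf i) +
    ((Finset.univ.image (fun i : Fin n => (f i).eval 1)) ×ˢ
      Finset.range (J + 1)).sup (fun lk => PH lk.1 lk.2), by positivity, ?_⟩
  intro p hp hPp m hm
  haveI : Fact p.Prime := ⟨hp⟩
  have hp2 : 2 < p := by omega
  have hpJ : J < p := by omega
  have hp0 : (0 : ℚ) < (p : ℚ) := by exact_mod_cast hp.pos
  have hp1 : (1 : ℚ) < (p : ℚ) := by exact_mod_cast hp.one_lt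
  have hPg' : ∀ i, padicNorm p (gval p (g i)) ≤ (p : ℚ) ^ (-(ρ i)) ∧
      (g i).denom.eval (p : ℚ) ≠ 0 := by
    intro i
    refine hPg i p hp ?_
    have := Finset.single_le_sum (f := Pg) (fun i' _ => Nat.zero_le _) (Finset.mem_univ i)
    omega
  have hPf' : ∀ i, 4 + (((f i).eval 1).natAbs : ℤ) ≤ (f i).eval (p : ℤ) := by
    intro i
    refine hPf i p ?_
    have := Finset.single_le_sum (f := Pf) (fun i' _ => Nat.zero_le _) (Finset.mem_univ i)
    omega
  have hPH' : ∀ l ∈ Finset.univ.image (fun i : Fin n => (f i).eval 1), ∀ k : ℕ, k ≤ J →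
      Even l → (∃ i, (f i).eval 1 = l) →
      padicNorm p (gval p (∑ i ∈ Finset.univ.filter (fun i => (f i).eval 1 = l),
        g i * (FQ (f i) - RatFunc.C (l : ℚ)) ^ k)) ≤ (p : ℚ) ^ (-((N : ℤ) - (k : ℤ))) := by
    intro l hl k hk hev hex
    refine hPH l k hev hex p hp ?_
    have hmem : (l, k) ∈ (Finset.univ.image (fun i : Fin n => (f i).eval 1)) ×ˢ
        Finset.range (J + 1) := by
      rw [Finset.mem_product]
      exact ⟨hl, Finset.mem_range.mpr (by omega)⟩
    have := Finset.le_sup (f := fun lk : ℤ × ℕ => PH lk.1 lk.2) hmem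
    simp only at this
    omega
  -- per-index data
  have hc : ∀ i : Fin n, ∃ c : ℤ, (f i).eval (p : ℤ) - (f i).eval 1 = ((p : ℤ) - 1) * c := by
    intro i
    obtain ⟨c, hc⟩ := Polynomial.sub_dvd_eval_sub (p : ℤ) 1 (f i)
    exact ⟨c, by omega⟩
  choose c hcspec using hc
  have hcnonneg : ∀ i, 0 ≤ c i := by
    intro i
    by_contra hneg
    push_neg at hneg
    have hp1' : (0 : ℤ) < (p : ℤ) - 1 := by
      have : (2 : ℤ) < (p : ℤ) := by exact_mod_cast hp2
      omega
    have h1 : ((p : ℤ) - 1) * c i < 0 := mul_neg_of_pos_of_neg hp1' hneg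
    have h2 := hPf' i
    have := hcspec i
    omega
  have hk4 : ∀ i, 4 ≤ (f i).eval (p : ℤ) := by
    intro i
    have h2 := hPf' i
    omega
  have hkl : ∀ i, (f i).eval 1 ≤ (f i).eval (p : ℤ) := by
    intro i
    have h2 := hPf' i
    omega
  have hpodd : Even ((p : ℤ) - 1) := by
    obtain ⟨t, ht⟩ := hp.odd_of_ne_two (by omega)
    exact ⟨t, by push_cast [ht]; ring⟩
  have hpar : ∀ i, (Even ((f i).eval (p : ℤ)) ↔ Even ((f i).eval 1)) := by
    intro i
    have h1 : Even ((f i).eval (p : ℤ) - (f i).eval 1) := by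
      rw [hcspec i]
      exact hpodd.mul_right _
    exact Int.even_sub.mp h1
  have hpint : ∀ z : ℤ, z ≠ 0 → ¬ ((p:ℤ) ∣ z) → padicNorm p ((z : ℤ) : ℚ) = 1 := by
    intro z hz hdvd
    rw [padicNorm.int_eq_one_iff]
    exact hdvd
  set e : Fin n → ℕ := fun i => (c i).toNat with hedef
  set B : ℕ := (Finset.univ.sup e) + 1 with hBdef
  have heB : ∀ i, e i < B := fun i => by
    have := Finset.le_sup (f := e) (Finset.mem_univ i)
    omega
  set D := m.divisors.filter (fun d => ¬ p ∣ d) with hDdef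
  set Ev := Finset.univ.filter (fun i : Fin n => Even ((f i).eval 1)) with hEvdef
  have step1 : (∑ i, gval p (g i) * amstar p ((f i).eval (p : ℤ)) m)
      = ∑ i ∈ Ev, gval p (g i) * sigmaStarQ p (((f i).eval (p:ℤ)).toNat - 1) m := by
    rw [hEvdef, Finset.sum_filter]
    refine Finset.sum_congr rfl fun i _ => ?_
    by_cases hEv : Even ((f i).eval 1)
    · rw [if_pos hEv, amstar, if_pos ⟨hk4 i, (hpar i).mpr hEv⟩]
    · rw [if_neg hEv, amstar, if_neg, mul_zero]
      intro hcon
      exact hEv ((hpar i).mp hcon.2)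
  have step2 : ∑ i ∈ Ev, gval p (g i) * sigmaStarQ p (((f i).eval (p:ℤ)).toNat - 1) m
      = ∑ d ∈ D, ∑ i ∈ Ev, gval p (g i) * (d : ℚ) ^ (((f i).eval (p:ℤ)).toNat - 1) := by
    rw [Finset.sum_comm]
    refine Finset.sum_congr rfl fun i _ => ?_
    rw [sigmaStarQ, Finset.mul_sum]
  rw [step1, step2]
  refine padic_sum_le (by positivity) fun d hd => ?_
  have hd1 : 1 ≤ d := Nat.pos_of_mem_divisors (Finset.mem_filter.mp hd).1
  have hdp : ¬ p ∣ d := by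
    have := (Finset.mem_filter.mp hd).2
    simpa using this
  have hdq0 : (d : ℚ) ≠ 0 := by positivity
  have hdn : padicNorm p (d : ℚ) = 1 := by
    have h1 : ¬ ((p:ℤ) ∣ (d:ℤ)) := by exact_mod_cast hdp
    have h2 : (((d:ℤ) : ℤ) : ℚ) = (d:ℚ) := by push_cast; rfl
    rw [← h2]
    exact (padicNorm.int_eq_one_iff (p := p) (d:ℤ)).mpr h1
  obtain ⟨cd, hcd⟩ := fermat_quot hp hdp
  have hcdQ : (d : ℚ) ^ (p - 1 : ℕ) = 1 + (p : ℚ) * (cd : ℚ) := by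
    exact_mod_cast congrArg (fun z : ℤ => (z : ℚ)) hcd
  have step3 : ∑ i ∈ Ev, gval p (g i) * (d : ℚ) ^ (((f i).eval (p:ℤ)).toNat - 1)
      = ∑ l ∈ Ev.image (fun i => (f i).eval 1),
          ∑ i ∈ Ev.filter (fun i => (f i).eval 1 = l),
            gval p (g i) * (d : ℚ) ^ (((f i).eval (p:ℤ)).toNat - 1) :=
    (Finset.sum_fiberwise_of_maps_to (fun i hi => Finset.mem_image_of_mem _ hi) _).symm
  rw [step3]
  refine padic_sum_le (by positivity) fun l hl => ?_
  obtain ⟨i0, hi0Ev, hi0l⟩ := Finset.mem_image.mp hl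
  have hevl : Even l := by
    rw [← hi0l]
    have := Finset.mem_filter.mp (by rwa [hEvdef] at hi0Ev)
    exact this.2
  have hexl : ∃ i, (f i).eval 1 = l := ⟨i0, hi0l⟩
  have hlmem : l ∈ Finset.univ.image (fun i : Fin n => (f i).eval 1) := by
    rw [← hi0l]
    exact Finset.mem_image_of_mem _ (Finset.mem_univ i0)
  have hfib : Ev.filter (fun i => (f i).eval 1 = l)
      = Finset.univ.filter (fun i => (f i).eval 1 = l) := by
    rw [hEvdef]
    ext i
    simp only [Finset.mem_filter, Finset.mem_univ, true_and]
    constructor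
    · rintro ⟨_, h⟩; exact h
    · intro h; exact ⟨h ▸ hevl, h⟩
  rw [hfib]
  have claim1 : ∀ i ∈ Finset.univ.filter (fun i => (f i).eval 1 = l),
      (d : ℚ) ^ (((f i).eval (p:ℤ)).toNat - 1)
      = (d : ℚ) ^ ((l - 1 : ℤ)) *
        ∑ j ∈ Finset.range B, ((p : ℚ) * (cd : ℚ)) ^ j * (((e i).choose j : ℕ) : ℚ) := by
    intro i hi
    have hfl : (f i).eval 1 = l := (Finset.mem_filter.mp hi).2
    have hd2 : (d : ℚ) ^ (((f i).eval (p:ℤ)).toNat - 1)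
        = (d : ℚ) ^ ((l - 1 : ℤ)) * (((d : ℚ) ^ (p - 1 : ℕ)) ^ (e i)) := by
      refine dpow_decomp (by omega) hd1 ?_ (hcnonneg i) (hk4 i)
      rw [← hfl]; exact hcspec i
    rw [hd2, hcdQ, one_add_pow_eq _ _ _ (heB i)]
  have claim2 : ∑ i ∈ Finset.univ.filter (fun i => (f i).eval 1 = l),
        gval p (g i) * (d : ℚ) ^ (((f i).eval (p:ℤ)).toNat - 1)
      = (d : ℚ) ^ ((l - 1 : ℤ)) * ∑ j ∈ Finset.range B,
          ((p : ℚ) * (cd : ℚ)) ^ j *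
            (∑ i ∈ Finset.univ.filter (fun i => (f i).eval 1 = l),
              gval p (g i) * (((e i).choose j : ℕ) : ℚ)) := by
    calc ∑ i ∈ Finset.univ.filter (fun i => (f i).eval 1 = l),
          gval p (g i) * (d:ℚ)^(((f i).eval (p:ℤ)).toNat - 1)
        = ∑ i ∈ Finset.univ.filter (fun i => (f i).eval 1 = l), ∑ j ∈ Finset.range B,
            (d:ℚ)^((l-1:ℤ)) * (((p:ℚ)*(cd:ℚ))^j *
              (gval p (g i) * (((e i).choose j : ℕ) : ℚ))) := by
          refine Finset.sum_congr rfl fun i hi => ?_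
          rw [claim1 i hi, Finset.mul_sum, Finset.mul_sum]
          refine Finset.sum_congr rfl fun j _ => by ring
      _ = ∑ j ∈ Finset.range B, ∑ i ∈ Finset.univ.filter (fun i => (f i).eval 1 = l),
            (d:ℚ)^((l-1:ℤ)) * (((p:ℚ)*(cd:ℚ))^j *
              (gval p (g i) * (((e i).choose j : ℕ) : ℚ))) := Finset.sum_comm
      _ = _ := by
          rw [Finset.mul_sum]
          refine Finset.sum_congr rfl fun j _ => ?_
          rw [← Finset.mul_sum, ← Finset.mul_sum]
  rw [claim2, padicNorm.mul, padicNorm_zpow_one hdn, one_mul]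
  refine padic_sum_le (by positivity) fun j _ => ?_
  have Wbound : padicNorm p (∑ i ∈ Finset.univ.filter (fun i => (f i).eval 1 = l),
      gval p (g i) * (((e i).choose j : ℕ) : ℚ)) ≤ (p : ℚ) ^ ((j : ℤ) - (N : ℤ)) := by
    by_cases hj : ((j : ℤ) : WithTop ℤ) + Mval g ≤ ((N : ℤ) : WithTop ℤ)
    · -- small j : use the bridge bounds for the H functions
      have hjJ : j ≤ J := smallj j hj
      have hjp : j < p := by omega
      have hfacn : padicNorm p (((j.factorial : ℕ) : ℚ))⁻¹ = 1 := by
        rw [padicNorm_inv']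
        have h1 : ¬ (p ∣ j.factorial) := fun hdvd => by
          have := (hp.dvd_factorial).mp hdvd
          omega
        have h2 : ¬ ((p:ℤ) ∣ (j.factorial : ℤ)) := by exact_mod_cast h1
        have h3 : (((j.factorial : ℤ) : ℤ) : ℚ) = ((j.factorial : ℕ) : ℚ) := by push_cast; rfl
        rw [← h3, (padicNorm.int_eq_one_iff _).mpr h2, inv_one]
      have hrw1 : ∑ i ∈ Finset.univ.filter (fun i => (f i).eval 1 = l),
          gval p (g i) * (((e i).choose j : ℕ) : ℚ)
          = ((j.factorial : ℕ) : ℚ)⁻¹ * ∑ i ∈ Finset.univ.filter (fun i => (f i).eval 1 = l),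
              gval p (g i) * (descPochhammer ℚ j).eval ((e i : ℕ) : ℚ) := by
        rw [Finset.mul_sum]
        refine Finset.sum_congr rfl fun i _ => ?_
        rw [choose_cast_eq]
        ring
      rw [hrw1, padicNorm.mul, hfacn, one_mul]
      have hdegDP : (descPochhammer ℚ j).natDegree = j := descPochhammer_natDegree ℚ j
      have hrw3 : ∑ i ∈ Finset.univ.filter (fun i => (f i).eval 1 = l),
          gval p (g i) * (descPochhammer ℚ j).eval ((e i : ℕ) : ℚ)
          = ∑ k ∈ Finset.range (j + 1), (descPochhammer ℚ j).coeff k *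
              (∑ i ∈ Finset.univ.filter (fun i => (f i).eval 1 = l),
                gval p (g i) * ((e i : ℕ) : ℚ) ^ k) := by
        calc ∑ i ∈ Finset.univ.filter (fun i => (f i).eval 1 = l),
              gval p (g i) * (descPochhammer ℚ j).eval ((e i : ℕ) : ℚ)
            = ∑ i ∈ Finset.univ.filter (fun i => (f i).eval 1 = l),
              ∑ k ∈ Finset.range (j + 1), (descPochhammer ℚ j).coeff k *
                (gval p (g i) * ((e i : ℕ) : ℚ) ^ k) := by
              refine Finset.sum_congr rfl fun i _ => ?_
              rw [Polynomial.eval_eq_sum_range, hdegDP, Finset.mul_sum]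
              refine Finset.sum_congr rfl fun k _ => by ring
          _ = ∑ k ∈ Finset.range (j + 1),
              ∑ i ∈ Finset.univ.filter (fun i => (f i).eval 1 = l),
                (descPochhammer ℚ j).coeff k * (gval p (g i) * ((e i : ℕ) : ℚ) ^ k) :=
              Finset.sum_comm
          _ = _ := Finset.sum_congr rfl fun k _ => by rw [← Finset.mul_sum]
      rw [hrw3]
      refine padic_sum_le (by positivity) fun k hk => ?_
      have hkj : k ≤ j := by
        have := Finset.mem_range.mp hk
        omega
      have hpzc : (2:ℤ) < (p:ℤ) := by exact_mod_cast hp2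
      have hpm1 : padicNorm p ((p:ℚ) - 1) = 1 := by
        have h2 : ¬ ((p:ℤ) ∣ ((p:ℤ) - 1)) := by
          intro hdvd
          rw [Int.dvd_iff_emod_eq_zero, Int.emod_eq_of_lt (by omega) (by omega)] at hdvd
          omega
        have h3 : ((((p:ℤ) - 1 : ℤ)) : ℚ) = (p:ℚ) - 1 := by push_cast; ring
        rw [← h3, (padicNorm.int_eq_one_iff _).mpr h2]
      have hei : ∀ i ∈ Finset.univ.filter (fun i => (f i).eval 1 = l),
          ((e i : ℕ) : ℚ) * ((p:ℚ) - 1) = (((f i).eval (p:ℤ) : ℤ) : ℚ) - (l : ℚ) := by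
        intro i hi
        have hfl : (f i).eval 1 = l := (Finset.mem_filter.mp hi).2
        have h1 : ((e i : ℕ) : ℤ) = c i := Int.toNat_of_nonneg (hcnonneg i)
        have h2 : ((f i).eval (p:ℤ)) - l = ((p:ℤ) - 1) * c i := by
          rw [← hfl]; exact hcspec i
        have h3 : (((f i).eval (p:ℤ) : ℤ) : ℚ) - (l : ℚ) = ((p:ℚ) - 1) * ((c i : ℤ) : ℚ) := by
          exact_mod_cast congrArg (fun z : ℤ => (z : ℚ)) h2
        have h4 : ((e i : ℕ) : ℚ) = ((c i : ℤ) : ℚ) := by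
          exact_mod_cast congrArg (fun z : ℤ => (z : ℚ)) h1
        rw [h3, h4]
        ring
      have hQev : ∀ i : Fin n,
          ((((f i).map (Int.castRingHom ℚ)) - Polynomial.C (l : ℚ)) ^ k).eval ((p:ℕ) : ℚ)
          = ((((f i).eval (p:ℤ) : ℤ) : ℚ) - (l : ℚ)) ^ k := by
        intro i
        rw [Polynomial.eval_pow, Polynomial.eval_sub, Polynomial.eval_C]
        have h5 : ((p:ℕ) : ℚ) = (Int.castRingHom ℚ) ((p:ℕ) : ℤ) := by simp
        rw [h5, Polynomial.eval_map, Polynomial.eval₂_at_apply]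
        rfl
      have hterm : ∀ i : Fin n, g i * (FQ (f i) - RatFunc.C (l : ℚ)) ^ k
          = g i * algebraMap (Polynomial ℚ) (RatFunc ℚ)
              (((f i).map (Int.castRingHom ℚ) - Polynomial.C (l : ℚ)) ^ k) := by
        intro i
        rw [map_pow, map_sub, RatFunc.algebraMap_C, FQ]
      have hdenoms : ∀ i ∈ Finset.univ.filter (fun i => (f i).eval 1 = l),
          (g i * algebraMap (Polynomial ℚ) (RatFunc ℚ)
            (((f i).map (Int.castRingHom ℚ) - Polynomial.C (l : ℚ)) ^ k)).denom.eval
              ((p:ℕ) : ℚ) ≠ 0 :=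
        fun i _ => (eval_mul_poly (g i) _ ((p:ℕ) : ℚ) (hPg' i).2).2
      obtain ⟨-, hev⟩ := eval_sum' (Finset.univ.filter (fun i => (f i).eval 1 = l))
        (fun i => g i * algebraMap (Polynomial ℚ) (RatFunc ℚ)
          (((f i).map (Int.castRingHom ℚ) - Polynomial.C (l : ℚ)) ^ k)) ((p:ℕ) : ℚ) hdenoms
      have hVH : (∑ i ∈ Finset.univ.filter (fun i => (f i).eval 1 = l),
            gval p (g i) * ((e i : ℕ) : ℚ) ^ k) * ((p:ℚ) - 1) ^ k
          = gval p (∑ i ∈ Finset.univ.filter (fun i => (f i).eval 1 = l),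
              g i * (FQ (f i) - RatFunc.C (l : ℚ)) ^ k) := by
        have hRHS : gval p (∑ i ∈ Finset.univ.filter (fun i => (f i).eval 1 = l),
              g i * (FQ (f i) - RatFunc.C (l : ℚ)) ^ k)
            = ∑ i ∈ Finset.univ.filter (fun i => (f i).eval 1 = l),
                gval p (g i) * ((((f i).eval (p:ℤ) : ℤ) : ℚ) - (l : ℚ)) ^ k := by
          rw [Finset.sum_congr rfl fun i _ => hterm i]
          simp only [gval]
          rw [hev]
          refine Finset.sum_congr rfl fun i hi => ?_
          rw [(eval_mul_poly (g i) _ ((p:ℕ) : ℚ) (hPg' i).2).1, hQev i]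
        rw [hRHS, Finset.sum_mul]
        refine Finset.sum_congr rfl fun i hi => ?_
        rw [mul_assoc, ← mul_pow, hei i hi]
      have hnorm1 : padicNorm p ((∑ i ∈ Finset.univ.filter (fun i => (f i).eval 1 = l),
            gval p (g i) * ((e i : ℕ) : ℚ) ^ k) * ((p:ℚ) - 1) ^ k)
          = padicNorm p (∑ i ∈ Finset.univ.filter (fun i => (f i).eval 1 = l),
              gval p (g i) * ((e i : ℕ) : ℚ) ^ k) := by
        rw [padicNorm.mul, padicNorm_pow', hpm1, one_pow, mul_one]
      have hVb : padicNorm p (∑ i ∈ Finset.univ.filter (fun i => (f i).eval 1 = l),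
          gval p (g i) * ((e i : ℕ) : ℚ) ^ k) ≤ (p:ℚ) ^ ((k : ℤ) - (N : ℤ)) := by
        rw [← hnorm1, hVH]
        have := hPH' l hlmem k (by omega) hevl hexl
        rwa [show -((N:ℤ) - (k:ℤ)) = (k:ℤ) - (N:ℤ) by ring] at this
      calc padicNorm p ((descPochhammer ℚ j).coeff k *
            (∑ i ∈ Finset.univ.filter (fun i => (f i).eval 1 = l),
              gval p (g i) * ((e i : ℕ) : ℚ) ^ k))
          = padicNorm p ((descPochhammer ℚ j).coeff k) *
            padicNorm p (∑ i ∈ Finset.univ.filter (fun i => (f i).eval 1 = l),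
              gval p (g i) * ((e i : ℕ) : ℚ) ^ k) := padicNorm.mul _ _
        _ ≤ 1 * (p:ℚ) ^ ((k : ℤ) - (N : ℤ)) :=
            mul_le_mul (descPochhammer_coeff_norm j k) hVb (padicNorm.nonneg _) zero_le_one
        _ = (p:ℚ) ^ ((k : ℤ) - (N : ℤ)) := one_mul _
        _ ≤ (p:ℚ) ^ ((j : ℤ) - (N : ℤ)) := zpow_le_zpow_right₀ hp1.le (by omega)
    · -- large j : use the valuation lower bounds on the g i directly
      refine padic_sum_le (by positivity) fun i _ => ?_
      rcases eq_or_ne (g i) 0 with hgi | hgi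
      · rw [hgi]
        have : gval p (0 : RatFunc ℚ) = 0 := by
          simp only [gval, RatFunc.eval_zero]
        rw [this, zero_mul, padicNorm.zero]
        positivity
      · have h1 : ((N:ℤ) : WithTop ℤ) < ((j:ℤ) : WithTop ℤ) + ((ρ i : ℤ) : WithTop ℤ) := by
          refine lt_of_lt_of_le (not_le.mp hj) (add_le_add_right ?_ _)
          rw [← hρ_eq i hgi]
          exact Mval_le_tval_term g i
        rw [← WithTop.coe_add, WithTop.coe_lt_coe] at h1
        have h2 : -(ρ i) ≤ (j:ℤ) - (N:ℤ) := by omega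
        calc padicNorm p (gval p (g i) * (((e i).choose j : ℕ) : ℚ))
            = padicNorm p (gval p (g i)) * padicNorm p (((e i).choose j : ℕ) : ℚ) :=
              padicNorm.mul _ _
          _ ≤ (p:ℚ) ^ (-(ρ i)) * 1 := mul_le_mul (hPg' i).1 (padicNorm_nat_le_one _)
              (padicNorm.nonneg _) (by positivity)
          _ = (p:ℚ) ^ (-(ρ i)) := mul_one _
          _ ≤ (p:ℚ) ^ ((j:ℤ) - (N:ℤ)) := zpow_le_zpow_right₀ hp1.le h2
  have hpc : padicNorm p ((p : ℚ) * (cd : ℚ)) ≤ (p:ℚ)⁻¹ := by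
    rw [padicNorm.mul, padicNorm.padicNorm_p hp.one_lt]
    calc (p:ℚ)⁻¹ * padicNorm p ((cd : ℤ) : ℚ) ≤ (p:ℚ)⁻¹ * 1 :=
          mul_le_mul_of_nonneg_left (padicNorm.of_int cd) (by positivity)
      _ = (p:ℚ)⁻¹ := mul_one _
  calc padicNorm p (((p:ℚ)*(cd:ℚ))^j *
        (∑ i ∈ Finset.univ.filter (fun i => (f i).eval 1 = l),
          gval p (g i) * (((e i).choose j : ℕ) : ℚ)))
      = padicNorm p ((p:ℚ)*(cd:ℚ))^j *
        padicNorm p (∑ i ∈ Finset.univ.filter (fun i => (f i).eval 1 = l),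
          gval p (g i) * (((e i).choose j : ℕ) : ℚ)) := by
        rw [padicNorm.mul, padicNorm_pow']
    _ ≤ ((p:ℚ)⁻¹)^j * (p:ℚ)^((j:ℤ)-(N:ℤ)) := by
        refine mul_le_mul ?_ Wbound (padicNorm.nonneg _) (by positivity)
        exact pow_le_pow_left₀ (padicNorm.nonneg _) hpc j
    _ = (p:ℚ)^(-(N:ℤ)) := by
        rw [inv_pow, ← zpow_natCast, ← zpow_neg, ← zpow_add₀ hp0.ne']
        congr 1
        ring
end

section
/- Let p be an odd prime and let k ≥ 4 be an even integer with (p − 1) ∤ k. Then G_k ≡ G*_k (mod p^{k−1}) coefficientwise in ℚ[[q]]: all coefficients of G_k and G*_k are p-integral, the constant terms satisfy v_p( −B_k/(2k) + (1 − p^{k−1})B_k/(2k) ) ≥ k − 1, and for every n ≥ 1, v_p( σ_{k−1}(n) − σ*_{k−1}(n) ) ≥ k − 1. -/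
open scoped BigOperators

/-- Serre's p-adic Eisenstein series G*_k (with the convention G*_k = 0 for bad k). -/
noncomputable def Gstar (p : ℕ) (k : ℤ) : PowerSeries ℚ :=
  if 4 ≤ k ∧ Even k then
    PowerSeries.mk fun n =>
      if n = 0 then -((1 - (p : ℚ) ^ (k.toNat - 1)) * bernoulli k.toNat / (2 * (k : ℚ)))
      else sigmaStarQ p (k.toNat - 1) n
  else 0

section Aux

open Finset

lemma sub_pow_expand (k : ℕ) (x y : ℤ) :
    ∃ z : ℤ, (x - y) ^ (k+1) = x ^ (k+1) - (k+1) * x ^ k * y + y ^ 2 * z := by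
  induction k with
  | zero => exact ⟨0, by ring⟩
  | succ k ih =>
    obtain ⟨z, hz⟩ := ih
    refine ⟨x * z + (k+1 : ℕ) * x ^ k - y * z, ?_⟩
    have : (x - y) ^ (k + 2) = (x - y) * (x - y) ^ (k + 1) := by ring
    rw [this, hz]
    push_cast
    ring

open Finset

lemma sum_perm_mul_mod {m c : ℕ} (hm : 0 < m) (hc : Nat.Coprime c m) (f : ℕ → ℤ) :
    ∑ a ∈ range m, f ((c * a) % m) = ∑ a ∈ range m, f a := by
  set c' := c ^ (Nat.totient m - 1) with hc'
  have htot : 1 ≤ Nat.totient m := Nat.totient_pos.2 hm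
  have hcc : c * c' ≡ 1 [MOD m] := by
    have : c * c' = c ^ Nat.totient m := by
      rw [hc', ← pow_succ']; congr 1; omega
    rw [this]; exact Nat.ModEq.pow_totient hc
  have hcc' : c' * c ≡ 1 [MOD m] := by rwa [mul_comm] at hcc
  have key : ∀ a < m, (c' * ((c * a) % m)) % m = a := by
    intro a ha
    have h1 : c' * ((c * a) % m) ≡ c' * (c * a) [MOD m] :=
      ((Nat.mod_modEq (c * a) m)).mul_left c'
    have h2 : c' * (c * a) ≡ 1 * a [MOD m] := by
      have : c' * (c * a) = (c' * c) * a := by ring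
      rw [this]; exact hcc'.mul_right a
    have := (h1.trans h2)
    simpa [Nat.ModEq, Nat.mod_eq_of_lt ha] using this
  refine Finset.sum_nbij' (fun a => (c * a) % m) (fun a => (c' * a) % m) ?_ ?_ ?_ ?_ ?_
  · intro a ha; exact mem_range.2 (Nat.mod_lt _ hm)
  · intro a ha; exact mem_range.2 (Nat.mod_lt _ hm)
  · intro a ha; exact key a (mem_range.1 ha)
  · intro a ha
    have ha' := mem_range.1 ha
    have h1 : c * ((c' * a) % m) ≡ c * (c' * a) [MOD m] :=
      ((Nat.mod_modEq (c' * a) m)).mul_left c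
    have h2 : c * (c' * a) ≡ 1 * a [MOD m] := by
      have : c * (c' * a) = (c * c') * a := by ring
      rw [this]; exact hcc.mul_right a
    have := h1.trans h2
    simpa [Nat.ModEq, Nat.mod_eq_of_lt ha'] using this
  · intro a ha; rfl

lemma key_dvd {p : ℕ} (hp : p.Prime) {c k : ℕ} (hcp : ¬ p ∣ c)
    (hc : ¬ (p:ℤ) ∣ ((c:ℤ)^k - 1)) (hk : 1 ≤ k)
    {e N : ℕ} (he : p ^ e ∣ k) (heN : e ≤ N) :
    (p:ℤ)^(N+e) ∣ ∑ a ∈ range (p^N), (a:ℤ)^k := by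
  set m := p ^ N with hmdef
  have hm : 0 < m := Nat.pow_pos hp.pos
  have hcop : Nat.Coprime c m :=
    Nat.Coprime.pow_right N (Nat.coprime_comm.mp ((Nat.Prime.coprime_iff_not_dvd hp).2 hcp))
  set S := ∑ a ∈ range m, (a:ℤ)^k with hS
  have perm : ∑ a ∈ range m, (((c * a) % m : ℕ) : ℤ)^k = S :=
    sum_perm_mul_mod hm hcop (fun x => (x:ℤ)^k)
  have hmod : ∀ a : ℕ, (((c * a) % m : ℕ) : ℤ) = (c:ℤ) * a - (m:ℤ) * ((c * a) / m : ℕ) := by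
    intro a
    have := Nat.mod_add_div (c * a) m
    push_cast
    push_cast at this
    linarith
  have hz : ∀ a : ℕ, ∃ z : ℤ, (((c * a) % m : ℕ) : ℤ)^k =
      ((c:ℤ) * a)^k - (k:ℤ) * ((c:ℤ) * a)^(k-1) * ((m:ℤ) * ((c * a) / m : ℕ))
        + ((m:ℤ) * ((c * a) / m : ℕ))^2 * z := by
    intro a
    obtain ⟨z, hz⟩ := sub_pow_expand (k-1) ((c:ℤ) * a) ((m:ℤ) * ((c * a) / m : ℕ))
    refine ⟨z, ?_⟩
    have hk1 : k - 1 + 1 = k := by omega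
    have hc1 : ((k - 1 : ℕ) : ℤ) + 1 = (k : ℤ) := by omega
    rw [hk1] at hz
    rw [hmod a, hz, hc1]
  choose z hz using hz
  set q : ℕ → ℤ := fun a => ((c * a) / m : ℕ) with hq
  set W := ∑ a ∈ range m, ((c:ℤ) * a)^(k-1) * q a with hW
  set Z := ∑ a ∈ range m, (q a)^2 * z a with hZ
  have hsum : ((c:ℤ)^k - 1) * S = (k:ℤ) * (m:ℤ) * W - ((m:ℤ))^2 * Z := by
    have e1 : S = (c:ℤ)^k * S - (k:ℤ) * (m:ℤ) * W + (m:ℤ)^2 * Z := by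
      calc S = ∑ a ∈ range m, (((c * a) % m : ℕ) : ℤ)^k := perm.symm
        _ = ∑ a ∈ range m, (((c:ℤ) * a)^k - (k:ℤ) * ((c:ℤ) * a)^(k-1) * ((m:ℤ) * q a)
              + ((m:ℤ) * q a)^2 * z a) := Finset.sum_congr rfl (fun a _ => hz a)
        _ = (c:ℤ)^k * S - (k:ℤ) * (m:ℤ) * W + (m:ℤ)^2 * Z := by
            rw [Finset.sum_add_distrib, Finset.sum_sub_distrib]
            congr 1
            · congr 1
              · rw [hS, Finset.mul_sum]
                exact Finset.sum_congr rfl fun a _ => by rw [mul_pow]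
              · rw [hW, Finset.mul_sum]
                exact Finset.sum_congr rfl fun a _ => by ring
            · rw [hZ, Finset.mul_sum]
              exact Finset.sum_congr rfl fun a _ => by ring
    linear_combination -e1
  have hdvd1 : (p:ℤ)^(N+e) ∣ (k:ℤ) * (m:ℤ) * W := by
    obtain ⟨k', hk'⟩ := he
    refine Dvd.dvd.mul_right ?_ W
    rw [hk', hmdef]
    push_cast
    rw [pow_add]
    ring_nf
    exact ⟨k', by ring⟩
  have hdvd2 : (p:ℤ)^(N+e) ∣ ((m:ℤ))^2 * Z := by
    refine Dvd.dvd.mul_right ?_ Z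
    rw [hmdef]
    push_cast
    rw [← pow_mul]
    exact pow_dvd_pow _ (by omega)
  have hdvd : (p:ℤ)^(N+e) ∣ ((c:ℤ)^k - 1) * S := hsum ▸ dvd_sub hdvd1 hdvd2
  have hpint : Prime (p:ℤ) := Nat.prime_iff_prime_int.1 hp
  have hco : IsCoprime ((p:ℤ)^(N+e)) ((c:ℤ)^k - 1) :=
    ((hpint.coprime_iff_not_dvd).2 hc).pow_left
  exact hco.dvd_of_dvd_mul_left hdvd

variable {p : ℕ} [hfp : Fact p.Prime]

lemma np_pow (q : ℚ) (n : ℕ) : padicNorm p (q ^ n) = padicNorm p q ^ n := by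
  induction n with
  | zero => simp
  | succ n ih => rw [pow_succ, padicNorm.mul, ih, pow_succ]

lemma np_nat_eq {m : ℕ} (hm : m ≠ 0) :
    padicNorm p (m : ℚ) = (p : ℚ) ^ (-(padicValNat p m : ℤ)) := by
  rw [padicNorm.eq_zpow_of_nonzero (by exact_mod_cast hm), padicValRat.of_nat]

lemma padicValNat_lt_self {m : ℕ} (hm : m ≠ 0) : padicValNat p m < m := by
  have h1 : p ^ padicValNat p m ≤ m :=
    Nat.le_of_dvd (Nat.pos_of_ne_zero hm) pow_padicValNat_dvd
  have h2 : m < p ^ m := Nat.lt_pow_self hfp.out.one_lt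
  exact (Nat.pow_lt_pow_iff_right hfp.out.one_lt).mp (lt_of_le_of_lt h1 h2)

lemma np_nat_inv_le {m : ℕ} (hm : m ≠ 0) :
    padicNorm p ((m : ℚ))⁻¹ ≤ (p : ℚ) ^ ((m : ℤ) - 1) := by
  have hp1 : (1 : ℚ) ≤ p := by exact_mod_cast hfp.out.one_le
  rw [inv_eq_one_div, padicNorm.div, padicNorm.one, np_nat_eq hm, one_div, ← zpow_neg, neg_neg]
  apply zpow_le_zpow_right₀ hp1
  have := padicValNat_lt_self (p := p) hm
  omega

lemma choose_id (i j : ℕ) (hij : i ≤ j) :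
    (j + 1).choose i * (j + 1 - i) = j.choose i * (j + 1) := by
  have h2 := Nat.add_one_mul_choose_eq j (j - i)
  rw [Nat.choose_symm hij] at h2
  have h3 : (j + 1).choose (j - i + 1) = (j + 1).choose i := by
    have : (j - i + 1) = (j + 1) - i := by omega
    rw [this, Nat.choose_symm (by omega)]
  rw [h3] at h2
  have h4 : (j - i + 1) = j + 1 - i := by omega
  rw [h4] at h2
  rw [← h2]; ring

lemma term_bound {i j N : ℕ} (hij : i < j) (hN : 1 ≤ N) {B : ℚ} (hB : padicNorm p B ≤ p) :
    padicNorm p (B * ((j + 1).choose i : ℚ) * (((p ^ N : ℕ) : ℚ)) ^ (j + 1 - i) / (j + 1))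
      ≤ (p : ℚ) ^ (((j + 1 - i : ℕ) : ℤ) * (1 - (N : ℤ))) := by
  have hp1 : (1 : ℚ) < p := by exact_mod_cast hfp.out.one_lt
  have hp0 : (0 : ℚ) < p := lt_trans one_pos hp1
  set m : ℕ := j + 1 - i with hm
  have hm2 : 2 ≤ m := by omega
  have hm0 : m ≠ 0 := by omega
  have hmQ : (m : ℚ) ≠ 0 := by exact_mod_cast hm0
  have hq : ((j + 1).choose i : ℚ) / (j + 1) = (j.choose i : ℚ) / m := by
    rw [div_eq_div_iff (by positivity) hmQ]
    exact_mod_cast choose_id i j (by omega)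
  have hsplit : B * ((j + 1).choose i : ℚ) * (((p ^ N : ℕ) : ℚ)) ^ m / (j + 1)
      = B * (((p ^ N : ℕ) : ℚ)) ^ m * ((j.choose i : ℚ) / m) := by
    rw [← hq]; ring
  rw [hsplit]
  have hx : padicNorm p ((((p ^ N : ℕ) : ℚ)) ^ m) = (p : ℚ) ^ (-((N : ℤ) * m)) := by
    rw [np_pow, np_nat_eq (Nat.pow_pos (n := N) hfp.out.pos).ne', padicValNat.prime_pow, ← zpow_natCast, ← zpow_mul]
    ring_nf
  have hc : padicNorm p ((j.choose i : ℚ) / m) ≤ (p : ℚ) ^ ((m : ℤ) - 1) := by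
    rw [div_eq_mul_inv, padicNorm.mul]
    calc padicNorm p (j.choose i : ℚ) * padicNorm p ((m : ℚ))⁻¹
        ≤ 1 * ((p : ℚ) ^ ((m : ℤ) - 1)) := by
          apply mul_le_mul (padicNorm.of_nat _) (np_nat_inv_le hm0)
            (padicNorm.nonneg _) zero_le_one
      _ = (p : ℚ) ^ ((m : ℤ) - 1) := one_mul _
  calc padicNorm p (B * (((p ^ N : ℕ) : ℚ)) ^ m * ((j.choose i : ℚ) / m))
      = padicNorm p B * padicNorm p ((((p ^ N : ℕ) : ℚ)) ^ m)
          * padicNorm p ((j.choose i : ℚ) / m) := by rw [padicNorm.mul, padicNorm.mul]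
    _ ≤ (p : ℚ) * (p : ℚ) ^ (-((N : ℤ) * m)) * ((p : ℚ) ^ ((m : ℤ) - 1)) := by
        apply mul_le_mul _ hc (padicNorm.nonneg _) (by positivity)
        rw [hx]
        exact mul_le_mul_of_nonneg_right hB (le_of_lt (zpow_pos hp0 _))
    _ = (p : ℚ) ^ ((1:ℤ) + -((N : ℤ) * m) + ((m : ℤ) - 1)) := by
        rw [zpow_add₀ (ne_of_gt hp0), zpow_add₀ (ne_of_gt hp0), zpow_one]
    _ = (p : ℚ) ^ ((m : ℤ) * (1 - (N : ℤ))) := by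
        congr 1
        ring

lemma bernoulli_norm_le (j : ℕ) : padicNorm p (bernoulli j) ≤ p := by
  induction j using Nat.strong_induction_on with
  | _ j ih =>
    have hp1 : (1 : ℚ) < p := by exact_mod_cast hfp.out.one_lt
    have hp0 : (0 : ℚ) < p := lt_trans one_pos hp1
    have hF := sum_range_pow (p ^ 1) j
    rw [Finset.sum_range_succ] at hF
    have hlast : bernoulli j * ((j + 1).choose j : ℚ) * (((p ^ 1 : ℕ) : ℚ)) ^ (j + 1 - j) / (j + 1)
        = bernoulli j * p := by
      rw [Nat.choose_succ_self_right]
      have h1 : j + 1 - j = 1 := by omega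
      rw [h1]
      have hj1 : ((j : ℚ) + 1) ≠ 0 := by positivity
      push_cast
      field_simp
    rw [hlast] at hF
    have hmain : bernoulli j * p = (∑ a ∈ Finset.range (p ^ 1), (a : ℚ) ^ j)
        - ∑ i ∈ Finset.range j, bernoulli i * ((j + 1).choose i : ℚ)
            * (((p ^ 1 : ℕ) : ℚ)) ^ (j + 1 - i) / (j + 1) := by
      rw [hF]; ring
    have hS : padicNorm p (∑ a ∈ Finset.range (p ^ 1), (a : ℚ) ^ j) ≤ 1 := by
      refine padicNorm.sum_le' ?_ zero_le_one
      intro a _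
      rw [np_pow]
      exact pow_le_one₀ (padicNorm.nonneg _) (padicNorm.of_nat a)
    have hT : padicNorm p (∑ i ∈ Finset.range j, bernoulli i * ((j + 1).choose i : ℚ)
        * (((p ^ 1 : ℕ) : ℚ)) ^ (j + 1 - i) / (j + 1)) ≤ 1 := by
      refine padicNorm.sum_le' ?_ zero_le_one
      intro i hi
      have := term_bound (p := p) (Finset.mem_range.1 hi) (le_refl 1) (ih i (Finset.mem_range.1 hi))
      simpa using this
    have hcomb : padicNorm p (bernoulli j * p) ≤ 1 := by
      rw [hmain]
      exact le_trans padicNorm.sub (max_le hS hT)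
    rw [padicNorm.mul, padicNorm.padicNorm_p_of_prime] at hcomb
    calc padicNorm p (bernoulli j)
        = padicNorm p (bernoulli j) * (p : ℚ)⁻¹ * p := by field_simp
      _ ≤ 1 * p := by
          apply mul_le_mul_of_nonneg_right hcomb (le_of_lt hp0)
      _ = p := one_mul _

lemma exists_good_c {k : ℕ} (hndvd : ¬ (p - 1) ∣ k) :
    ∃ c : ℕ, ¬ p ∣ c ∧ ¬ (p:ℤ) ∣ ((c:ℤ) ^ k - 1) := by
  obtain ⟨g, hg⟩ := IsCyclic.exists_generator (α := (ZMod p)ˣ)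
  have horder : orderOf g = p - 1 := by
    rw [orderOf_eq_card_of_forall_mem_zpowers hg, Nat.card_eq_fintype_card, ZMod.card_units]
  have hgk : g ^ k ≠ 1 := by
    intro h
    exact hndvd (horder ▸ orderOf_dvd_of_pow_eq_one h)
  set c : ℕ := ((g : ZMod p)).val with hc
  have hcast : ((c : ℕ) : ZMod p) = (g : ZMod p) := by
    rw [hc, ZMod.natCast_val, ZMod.cast_id]
  refine ⟨c, ?_, ?_⟩
  · intro hdvd
    have : ((c : ℕ) : ZMod p) = 0 := (ZMod.natCast_eq_zero_iff c p).2 hdvd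
    rw [hcast] at this
    exact g.ne_zero this
  · intro hdvd
    have h0 : (((c:ℤ) ^ k - 1 : ℤ) : ZMod p) = 0 :=
      (ZMod.intCast_zmod_eq_zero_iff_dvd _ p).2 hdvd
    push_cast at h0
    rw [hcast] at h0
    have : (g : ZMod p) ^ k = 1 := by linear_combination h0
    apply hgk
    ext
    push_cast
    exact this

lemma bernoulli_div_norm_le {k : ℕ} (hk1 : 1 ≤ k) (hndvd : ¬ (p - 1) ∣ k) :
    padicNorm p ((bernoulli k : ℚ) / k) ≤ 1 := by
  have hp1 : (1 : ℚ) < p := by exact_mod_cast hfp.out.one_lt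
  have hp0 : (0 : ℚ) < p := lt_trans one_pos hp1
  set e : ℕ := padicValNat p k with he
  set N : ℕ := e + 2 with hN
  obtain ⟨c, hcp, hc⟩ := exists_good_c (p := p) hndvd
  -- integrality of the power sum
  have hdvd : (p:ℤ) ^ (N + e) ∣ ∑ a ∈ Finset.range (p ^ N), (a : ℤ) ^ k :=
    key_dvd hfp.out hcp hc hk1 pow_padicValNat_dvd (by omega)
  have hSnorm : padicNorm p (∑ a ∈ Finset.range (p ^ N), (a : ℚ) ^ k)
      ≤ (p : ℚ) ^ (-((N + e : ℕ) : ℤ)) := by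
    have hcastS : ((∑ a ∈ Finset.range (p ^ N), (a : ℤ) ^ k : ℤ) : ℚ)
        = ∑ a ∈ Finset.range (p ^ N), (a : ℚ) ^ k := by push_cast; rfl
    rw [← hcastS]
    apply (padicNorm.dvd_iff_norm_le (p := p)).1
    push_cast
    exact hdvd
  -- Faulhaber
  have hF := sum_range_pow (p ^ N) k
  rw [Finset.sum_range_succ] at hF
  have hlast : bernoulli k * ((k + 1).choose k : ℚ) * (((p ^ N : ℕ) : ℚ)) ^ (k + 1 - k) / (k + 1)
      = bernoulli k * ((p ^ N : ℕ) : ℚ) := by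
    rw [Nat.choose_succ_self_right]
    have h1 : k + 1 - k = 1 := by omega
    rw [h1]
    have hj1 : ((k : ℚ) + 1) ≠ 0 := by positivity
    field_simp
    push_cast
    ring
  rw [hlast] at hF
  have hmain : bernoulli k * ((p ^ N : ℕ) : ℚ) = (∑ a ∈ Finset.range (p ^ N), (a : ℚ) ^ k)
      - ∑ i ∈ Finset.range k, bernoulli i * ((k + 1).choose i : ℚ)
          * (((p ^ N : ℕ) : ℚ)) ^ (k + 1 - i) / (k + 1) := by
    rw [hF]; ring
  have hT : padicNorm p (∑ i ∈ Finset.range k, bernoulli i * ((k + 1).choose i : ℚ)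
      * (((p ^ N : ℕ) : ℚ)) ^ (k + 1 - i) / (k + 1)) ≤ (p : ℚ) ^ (-((N + e : ℕ) : ℤ)) := by
    refine padicNorm.sum_le' ?_ (le_of_lt (zpow_pos hp0 _))
    intro i hi
    have hik := Finset.mem_range.1 hi
    refine le_trans (term_bound (p := p) hik (by omega) (bernoulli_norm_le i)) ?_
    apply zpow_le_zpow_right₀ (le_of_lt hp1)
    have hm2 : (2 : ℤ) ≤ ((k + 1 - i : ℕ) : ℤ) := by omega
    have hNe : (N : ℤ) = (e : ℤ) + 2 := by omega
    have hcast : ((N + e : ℕ) : ℤ) = (N : ℤ) + (e : ℤ) := by push_cast; ring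
    rw [hcast]
    nlinarith [mul_nonneg (sub_nonneg.2 hm2) (by linarith : (0:ℤ) ≤ (N:ℤ) - 1)]
  have hcomb : padicNorm p (bernoulli k * ((p ^ N : ℕ) : ℚ)) ≤ (p : ℚ) ^ (-((N + e : ℕ) : ℤ)) := by
    rw [hmain]
    exact le_trans padicNorm.sub (max_le hSnorm hT)
  have hXnorm : padicNorm p (((p ^ N : ℕ) : ℚ)) = (p : ℚ) ^ (-(N : ℤ)) := by
    rw [np_nat_eq (Nat.pow_pos (n := N) hfp.out.pos).ne', padicValNat.prime_pow]
  rw [padicNorm.mul, hXnorm] at hcomb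
  have hBk : padicNorm p (bernoulli k) ≤ (p : ℚ) ^ (-(e : ℤ)) := by
    have hppos : (0:ℚ) < (p : ℚ) ^ (N : ℤ) := zpow_pos hp0 _
    have := mul_le_mul_of_nonneg_right hcomb (le_of_lt hppos)
    calc padicNorm p (bernoulli k)
        = padicNorm p (bernoulli k) * (p : ℚ) ^ (-(N:ℤ)) * (p : ℚ) ^ (N:ℤ) := by
          rw [mul_assoc, ← zpow_add₀ (ne_of_gt hp0)]
          simp
      _ ≤ (p : ℚ) ^ (-((N + e : ℕ) : ℤ)) * (p : ℚ) ^ (N:ℤ) := this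
      _ = (p : ℚ) ^ (-(e : ℤ)) := by
          rw [← zpow_add₀ (ne_of_gt hp0)]
          congr 1
          push_cast
          ring
  have hknorm : padicNorm p ((k : ℚ))⁻¹ = (p : ℚ) ^ ((e : ℤ)) := by
    rw [inv_eq_one_div, padicNorm.div, padicNorm.one, np_nat_eq (by omega), one_div,
      ← zpow_neg, neg_neg]
  rw [div_eq_mul_inv, padicNorm.mul, hknorm]
  calc padicNorm p (bernoulli k) * (p : ℚ) ^ ((e : ℤ))
      ≤ (p : ℚ) ^ (-(e : ℤ)) * (p : ℚ) ^ ((e : ℤ)) :=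
        mul_le_mul_of_nonneg_right hBk (le_of_lt (zpow_pos hp0 _))
    _ = 1 := by rw [← zpow_add₀ (ne_of_gt hp0)]; simp

lemma natsum_norm_le (j : ℕ) (s : Finset ℕ) : padicNorm p (∑ d ∈ s, (d : ℚ) ^ j) ≤ 1 := by
  refine padicNorm.sum_le' ?_ zero_le_one
  intro d _
  rw [np_pow]
  exact pow_le_one₀ (padicNorm.nonneg _) (padicNorm.of_nat d)

lemma nat_dvd_norm_le {d j : ℕ} (hd : p ∣ d) :
    padicNorm p ((d : ℚ) ^ j) ≤ (p : ℚ) ^ (-(j : ℤ)) := by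
  have h1 : padicNorm p (d : ℚ) ≤ (p : ℚ) ^ (-(1 : ℕ) : ℤ) := by
    have := (padicNorm.dvd_iff_norm_le (p := p) (n := 1) (z := (d : ℤ))).1 (by push_cast [pow_one]; exact_mod_cast hd)
    simpa using this
  have hp0 : (0 : ℚ) < p := by exact_mod_cast hfp.out.pos
  calc padicNorm p ((d : ℚ) ^ j) = (padicNorm p (d : ℚ)) ^ j := np_pow _ _
    _ ≤ ((p : ℚ) ^ (-(1 : ℕ) : ℤ)) ^ j := pow_le_pow_left₀ (padicNorm.nonneg _) (by simpa using h1) j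
    _ = (p : ℚ) ^ (-(j : ℤ)) := by
        rw [← zpow_natCast (((p:ℚ)) ^ (-(1 : ℕ) : ℤ)) j, ← zpow_mul]
        congr 1
        simp

end Aux

theorem statement8 (p : ℕ) (hp : p.Prime) (hodd : p ≠ 2)
    (k : ℕ) (hk4 : 4 ≤ k) (hke : Even k) (hndvd : ¬ (p - 1) ∣ k) :
    SCongr p (k - 1) (G (k : ℤ)) (Gstar p (k : ℤ)) := by
  haveI hfp : Fact p.Prime := ⟨hp⟩
  have hp1 : (1 : ℚ) < p := by exact_mod_cast hp.one_lt
  have hp0 : (0 : ℚ) < p := lt_trans one_pos hp1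
  have hcond : 4 ≤ (k : ℤ) ∧ Even (k : ℤ) := ⟨by exact_mod_cast hk4, by exact_mod_cast hke⟩
  have htn : ((k : ℤ)).toNat = k := Int.toNat_natCast k
  have hkQ : (((k : ℤ)) : ℚ) = (k : ℚ) := by push_cast; ring
  have hGc : ∀ n, PowerSeries.coeff n (G (k : ℤ)) =
      if n = 0 then -(bernoulli k) / (2 * (k : ℚ)) else sigmaQ (k - 1) n := by
    intro n
    rw [G, if_pos hcond, PowerSeries.coeff_mk, htn, hkQ]
  have hGsc : ∀ n, PowerSeries.coeff n (Gstar p (k : ℤ)) =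
      if n = 0 then -((1 - (p : ℚ) ^ (k - 1)) * bernoulli k / (2 * (k : ℚ)))
      else sigmaStarQ p (k - 1) n := by
    intro n
    rw [Gstar, if_pos hcond, PowerSeries.coeff_mk, htn, hkQ]
  -- the key integrality of B_k/(2k)
  have h2 : padicNorm p (2 : ℚ) = 1 := by
    have : ¬ p ∣ 2 := fun h => hodd ((Nat.prime_dvd_prime_iff_eq hp Nat.prime_two).1 h)
    have h21 : padicNorm p ((2 : ℕ) : ℚ) = 1 := (padicNorm.nat_eq_one_iff 2).2 this
    exact_mod_cast h21
  have hx : padicNorm p (bernoulli k / (2 * (k : ℚ))) ≤ 1 := by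
    have hbase := bernoulli_div_norm_le (p := p) (by omega : 1 ≤ k) hndvd
    have heq : bernoulli k / (2 * (k : ℚ)) = (bernoulli k / (k : ℚ)) / 2 := by ring
    rw [heq, padicNorm.div, h2, div_one]
    exact hbase
  set x : ℚ := bernoulli k / (2 * (k : ℚ)) with hxdef
  set P : ℚ := (p : ℚ) ^ (k - 1) with hPdef
  have hPnorm : padicNorm p P = (p : ℚ) ^ (-((k - 1 : ℕ) : ℤ)) := by
    rw [hPdef, np_pow, padicNorm.padicNorm_p_of_prime, inv_pow, ← zpow_natCast, ← zpow_neg]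
  have hPx : padicNorm p (P * x) ≤ (p : ℚ) ^ (-((k - 1 : ℕ) : ℤ)) := by
    rw [padicNorm.mul, hPnorm]
    calc (p : ℚ) ^ (-((k - 1 : ℕ) : ℤ)) * padicNorm p x
        ≤ (p : ℚ) ^ (-((k - 1 : ℕ) : ℤ)) * 1 :=
          mul_le_mul_of_nonneg_left hx (le_of_lt (zpow_pos hp0 _))
      _ = _ := mul_one _
  refine ⟨?_, ?_, ?_⟩
  · intro n
    rw [hGc n]
    by_cases hn : n = 0
    · rw [if_pos hn]
      have : -(bernoulli k) / (2 * (k : ℚ)) = -x := by rw [hxdef]; ring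
      rw [this, padicNorm.neg]
      exact hx
    · rw [if_neg hn, sigmaQ]
      exact natsum_norm_le _ _
  · intro n
    rw [hGsc n]
    by_cases hn : n = 0
    · rw [if_pos hn]
      have : -((1 - P) * bernoulli k / (2 * (k : ℚ))) = -(x - P * x) := by
        rw [hxdef]; ring
      rw [this, padicNorm.neg]
      refine le_trans padicNorm.sub (max_le hx ?_)
      calc padicNorm p (P * x) ≤ (p : ℚ) ^ (-((k - 1 : ℕ) : ℤ)) := hPx
        _ ≤ 1 := by
            rw [show (1:ℚ) = (p:ℚ) ^ (0:ℤ) by simp]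
            exact zpow_le_zpow_right₀ (le_of_lt hp1) (by omega)
    · rw [if_neg hn, sigmaStarQ]
      exact natsum_norm_le _ _
  · intro n
    rw [map_sub, hGc n, hGsc n]
    by_cases hn : n = 0
    · rw [if_pos hn, if_pos hn]
      have : -(bernoulli k) / (2 * (k : ℚ)) - -((1 - P) * bernoulli k / (2 * (k : ℚ)))
          = -(P * x) := by rw [hxdef]; ring
      rw [this, padicNorm.neg]
      exact hPx
    · rw [if_neg hn, if_neg hn, sigmaQ, sigmaStarQ]
      have hsplit : sigmaQ (k - 1) n - sigmaStarQ p (k - 1) n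
          = ∑ d ∈ n.divisors.filter (fun d => p ∣ d), (d : ℚ) ^ (k - 1) := by
        rw [sigmaQ, sigmaStarQ]
        have := Finset.sum_filter_add_sum_filter_not n.divisors (fun d => p ∣ d)
          (fun d => (d : ℚ) ^ (k - 1))
        linarith [this]
      rw [← sigmaQ, ← sigmaStarQ, hsplit]
      refine padicNorm.sum_le' ?_ (le_of_lt (zpow_pos hp0 _))
      intro d hd
      have hpd : p ∣ d := (Finset.mem_filter.1 hd).2
      exact nat_dvd_norm_le hpd
end

section
/- Let p be a prime and let N, M be integers with M ≤ N and p ≥ N − M + 4. Let (a_m)_{m≥1} be a sequence in ℚ_p such that v_p(a_m) ≥ (p−2)m/(p−1) − 2 for every m ≥ 1 and v_p(a_m) ≥ m − 1 whenever p ≥ m + 2. Let c_1,…,c_n ∈ ℚ_p with v_p(c_i) ≥ M for every i, and let x_1,…,x_n ∈ ℤ_p. Assume that v_p( ∑_{i=1}^n c_i·x_i^m ) ≥ N − m for every integer m with 0 ≤ m ≤ N − M. Then the series ∑_{m≥1} a_m·( ∑_{i=1}^n c_i·x_i^{m−1} ) converges in ℚ_p and its sum S satisfies v_p(S) ≥ N.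 -/
open scoped BigOperators

theorem statement10 (p : ℕ) [hp : Fact p.Prime] (N M : ℤ) (hMN : M ≤ N)
    (hpNM : N - M + 4 ≤ (p : ℤ)) (a : ℕ → ℚ_[p])
    (ha1 : ∀ m : ℕ, 1 ≤ m →
      ‖a m‖ ≤ (p : ℝ) ^ (-((((p : ℝ) - 2) * (m : ℝ) / ((p : ℝ) - 1)) - 2)))
    (ha2 : ∀ m : ℕ, 1 ≤ m → m + 2 ≤ p → ‖a m‖ ≤ (p : ℝ) ^ (-((m : ℝ) - 1)))
    (n : ℕ) (c : Fin n → ℚ_[p]) (hc : ∀ i, ‖c i‖ ≤ (p : ℝ) ^ (-(M : ℝ)))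
    (x : Fin n → ℚ_[p]) (hx : ∀ i, ‖x i‖ ≤ 1)
    (hsum : ∀ m : ℕ, (m : ℤ) ≤ N - M →
      ‖∑ i, c i * x i ^ m‖ ≤ (p : ℝ) ^ (-((N : ℝ) - (m : ℝ)))) :
    ∃ S : ℚ_[p],
      HasSum (fun m : ℕ => a (m + 1) * ∑ i, c i * x i ^ m) S ∧
      ‖S‖ ≤ (p : ℝ) ^ (-(N : ℝ)) := by
  set q : ℝ := (p : ℝ) with hq
  have hp1 : 1 < q := by
    rw [hq]; exact_mod_cast hp.out.one_lt
  have hp0 : 0 < q := lt_trans one_pos hp1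
  have hpNM' : (N : ℝ) - (M : ℝ) + 4 ≤ q := by
    rw [hq]; exact_mod_cast hpNM
  have hMN' : (M : ℝ) ≤ (N : ℝ) := by exact_mod_cast hMN
  -- crude bound on the inner sums
  have hcrude : ∀ m : ℕ, ‖∑ i, c i * x i ^ m‖ ≤ q ^ (-(M : ℝ)) := by
    intro m
    refine IsUltrametricDist.norm_sum_le_of_forall_le_of_nonneg
      (Real.rpow_nonneg hp0.le _) (fun i _ => ?_)
    calc ‖c i * x i ^ m‖ = ‖c i‖ * ‖x i‖ ^ m := by rw [norm_mul, norm_pow]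
    _ ≤ q ^ (-(M : ℝ)) * 1 := by
        apply mul_le_mul (hc i) (pow_le_one₀ (norm_nonneg _) (hx i))
          (pow_nonneg (norm_nonneg _) m) (Real.rpow_nonneg hp0.le _)
    _ = q ^ (-(M : ℝ)) := mul_one _
  -- per-term bound
  have hterm : ∀ m : ℕ, ‖a (m + 1) * ∑ i, c i * x i ^ m‖ ≤ q ^ (-(N : ℝ)) := by
    intro m
    rw [norm_mul]
    by_cases hm : (m : ℤ) ≤ N - M + 1
    · -- use ha2
      have hm3 : (m + 1) + 2 ≤ p := by
        have : ((m : ℤ)) + 3 ≤ (p : ℤ) := by omega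
        exact_mod_cast this
      have hA := ha2 (m + 1) (by omega) hm3
      have hA' : ‖a (m + 1)‖ ≤ q ^ (-(m : ℝ)) := by
        convert hA using 3
        push_cast; ring
      by_cases hm' : (m : ℤ) ≤ N - M
      · have hB := hsum m hm'
        calc ‖a (m + 1)‖ * ‖∑ i, c i * x i ^ m‖
            ≤ q ^ (-(m : ℝ)) * q ^ (-((N : ℝ) - (m : ℝ))) :=
              mul_le_mul hA' hB (norm_nonneg _) (Real.rpow_nonneg hp0.le _)
        _ = q ^ (-(N : ℝ)) := by
            rw [← Real.rpow_add hp0]; ring_nf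
      · calc ‖a (m + 1)‖ * ‖∑ i, c i * x i ^ m‖
            ≤ q ^ (-(m : ℝ)) * q ^ (-(M : ℝ)) :=
              mul_le_mul hA' (hcrude m) (norm_nonneg _) (Real.rpow_nonneg hp0.le _)
        _ = q ^ (-(m : ℝ) + -(M : ℝ)) := (Real.rpow_add hp0 _ _).symm
        _ ≤ q ^ (-(N : ℝ)) := by
            apply Real.rpow_le_rpow_of_exponent_le hp1.le
            have : (N : ℤ) - M + 1 ≤ (m : ℤ) := by omega
            have : (N : ℝ) - (M : ℝ) + 1 ≤ (m : ℝ) := by exact_mod_cast this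
            linarith
    · -- use ha1
      have hA := ha1 (m + 1) (by omega)
      have hm' : (N : ℝ) - (M : ℝ) + 2 ≤ (m : ℝ) := by
        have : (N : ℤ) - M + 2 ≤ (m : ℤ) := by omega
        exact_mod_cast this
      calc ‖a (m + 1)‖ * ‖∑ i, c i * x i ^ m‖
          ≤ q ^ (-(((q - 2) * ((m + 1 : ℕ) : ℝ) / (q - 1)) - 2)) * q ^ (-(M : ℝ)) :=
            mul_le_mul hA (hcrude m) (norm_nonneg _) (Real.rpow_nonneg hp0.le _)
      _ = q ^ (-(((q - 2) * ((m + 1 : ℕ) : ℝ) / (q - 1)) - 2) + -(M : ℝ)) :=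
            (Real.rpow_add hp0 _ _).symm
      _ ≤ q ^ (-(N : ℝ)) := by
          apply Real.rpow_le_rpow_of_exponent_le hp1.le
          have hq1 : (0 : ℝ) < q - 1 := by linarith
          have key : (N : ℝ) - M + 2 ≤ (q - 2) * (((m + 1 : ℕ) : ℝ)) / (q - 1) := by
            rw [le_div_iff₀ hq1]
            push_cast
            nlinarith [hm', hpNM', hMN']
          linarith [key]
  -- geometric bound for summability
  set s : ℝ := -((q - 2) / (q - 1)) with hs
  set r : ℝ := q ^ s with hr
  have hq1 : (0 : ℝ) < q - 1 := by linarith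
  have hs0 : s < 0 := by
    rw [hs, neg_lt, neg_zero]
    apply div_pos (by linarith) hq1
  have hr0 : 0 ≤ r := Real.rpow_nonneg hp0.le _
  have hr1 : r < 1 := Real.rpow_lt_one_of_one_lt_of_neg hp1 hs0
  have hgeom : ∀ m : ℕ, ‖a (m + 1) * ∑ i, c i * x i ^ m‖ ≤
      (q ^ (2 - (M : ℝ)) * r) * r ^ m := by
    intro m
    rw [norm_mul]
    have hA := ha1 (m + 1) (by omega)
    calc ‖a (m + 1)‖ * ‖∑ i, c i * x i ^ m‖
        ≤ q ^ (-(((q - 2) * ((m + 1 : ℕ) : ℝ) / (q - 1)) - 2)) * q ^ (-(M : ℝ)) :=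
          mul_le_mul hA (hcrude m) (norm_nonneg _) (Real.rpow_nonneg hp0.le _)
    _ = (q ^ (2 - (M : ℝ)) * r) * r ^ m := by
        rw [hr, ← Real.rpow_natCast (q ^ s) m, ← Real.rpow_mul hp0.le,
          ← Real.rpow_add hp0, ← Real.rpow_add hp0, ← Real.rpow_add hp0]
        congr 1
        rw [hs]
        push_cast
        field_simp
        ring
  have hsummable : Summable (fun m : ℕ => a (m + 1) * ∑ i, c i * x i ^ m) := by
    apply Summable.of_norm_bounded (Summable.mul_left _ (summable_geometric_of_lt_one hr0 hr1))
    exact hgeom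
  refine ⟨∑' m, a (m + 1) * ∑ i, c i * x i ^ m, hsummable.hasSum, ?_⟩
  exact IsUltrametricDist.norm_tsum_le_of_forall_le_of_nonneg
    (Real.rpow_nonneg hp0.le _) hterm
end

section
/- Let p be a prime and let N, M be integers with M ≤ N and p ≥ N − M + 4. Let l be an integer and let (a_m)_{m≥2} be a sequence in ℚ_p such that v_p(a_m) ≥ (p−2)m/(p−1) − 2 for every m ≥ 2 and v_p(a_m) ≥ m − 1 whenever p ≥ m + 2. Let c_1,…,c_n ∈ ℚ_p with v_p(c_i) ≥ M for every i, and let x_1,…,x_n ∈ ℤ_p. Assume that v_p( ∑_{i=1}^n c_i·(x_i^m − l^m) ) ≥ N − m for every integer m with 1 ≤ m ≤ N − M. Then the series ∑_{m≥2} a_m·( ∑_{i=1}^n c_i·(x_i^{m−1} − l^{m−1}) ) converges in ℚ_p and its sum S satisfies v_p(S) ≥ N. -/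
open scoped BigOperators

theorem statement11 (p : ℕ) [hp : Fact p.Prime] (N M : ℤ) (hMN : M ≤ N)
    (hpNM : N - M + 4 ≤ (p : ℤ)) (l : ℤ) (a : ℕ → ℚ_[p])
    (ha1 : ∀ m : ℕ, 2 ≤ m →
      ‖a m‖ ≤ (p : ℝ) ^ (-((((p : ℝ) - 2) * (m : ℝ) / ((p : ℝ) - 1)) - 2)))
    (ha2 : ∀ m : ℕ, 2 ≤ m → m + 2 ≤ p → ‖a m‖ ≤ (p : ℝ) ^ (-((m : ℝ) - 1)))
    (n : ℕ) (c : Fin n → ℚ_[p]) (hc : ∀ i, ‖c i‖ ≤ (p : ℝ) ^ (-(M : ℝ)))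
    (x : Fin n → ℚ_[p]) (hx : ∀ i, ‖x i‖ ≤ 1)
    (hsum : ∀ m : ℕ, 1 ≤ m → (m : ℤ) ≤ N - M →
      ‖∑ i, c i * (x i ^ m - (l : ℚ_[p]) ^ m)‖ ≤ (p : ℝ) ^ (-((N : ℝ) - (m : ℝ)))) :
    ∃ S : ℚ_[p],
      HasSum (fun m : ℕ => a (m + 2) * ∑ i, c i * (x i ^ (m + 1) - (l : ℚ_[p]) ^ (m + 1))) S ∧
      ‖S‖ ≤ (p : ℝ) ^ (-(N : ℝ)) := by
  have hp1 : (1 : ℝ) < (p : ℝ) := by exact_mod_cast hp.out.one_lt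
  have hp0 : (0 : ℝ) < (p : ℝ) := by linarith
  have hMNR : (M : ℝ) ≤ (N : ℝ) := by exact_mod_cast hMN
  have hdR : (N : ℝ) - (M : ℝ) + 4 ≤ (p : ℝ) := by exact_mod_cast hpNM
  set f : ℕ → ℚ_[p] :=
    fun m : ℕ => a (m + 2) * ∑ i, c i * (x i ^ (m + 1) - (l : ℚ_[p]) ^ (m + 1)) with hf
  -- uniform bound on the inner sum
  have hT : ∀ k : ℕ, ‖∑ i, c i * (x i ^ k - (l : ℚ_[p]) ^ k)‖ ≤ (p : ℝ) ^ (-(M : ℝ)) := by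
    intro k
    apply IsUltrametricDist.norm_sum_le_of_forall_le_of_nonneg (Real.rpow_nonneg hp0.le _)
    intro i _
    rw [norm_mul]
    calc ‖c i‖ * ‖x i ^ k - (l : ℚ_[p]) ^ k‖
        ≤ (p : ℝ) ^ (-(M : ℝ)) * 1 := by
          apply mul_le_mul (hc i) ?_ (norm_nonneg _) (Real.rpow_nonneg hp0.le _)
          rw [sub_eq_add_neg]
          refine (IsUltrametricDist.norm_add_le_max _ _).trans (max_le ?_ ?_)
          · rw [norm_pow]; exact pow_le_one₀ (norm_nonneg _) (hx i)
          · rw [norm_neg, norm_pow]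
            exact pow_le_one₀ (norm_nonneg _) (Padic.norm_int_le_one l)
      _ = (p : ℝ) ^ (-(M : ℝ)) := mul_one _
  have hmono : ∀ s t : ℝ, s ≤ t → (p : ℝ) ^ s ≤ (p : ℝ) ^ t := fun s t h =>
    (Real.rpow_le_rpow_left_iff hp1).2 h
  have hrpow_add : ∀ s t : ℝ, (p : ℝ) ^ (s + t) = (p : ℝ) ^ s * (p : ℝ) ^ t := fun s t =>
    Real.rpow_add hp0 s t
  -- bound from ha1, valid for every m
  have ha1' : ∀ m : ℕ,
      ‖a (m + 2)‖ ≤ (p : ℝ) ^ (-((((p : ℝ) - 2) * ((m : ℝ) + 2) / ((p : ℝ) - 1)) - 2)) := by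
    intro m
    have h1 := ha1 (m + 2) (by omega)
    convert h1 using 4
    push_cast; ring
  -- main term bound
  have hkey : ∀ m : ℕ, ‖f m‖ ≤ (p : ℝ) ^ (-(N : ℝ)) := by
    intro m
    simp only [hf]
    rw [norm_mul]
    by_cases hk : ((m : ℤ) + 1) ≤ N - M
    · -- small exponent : use hsum and ha2
      have hm4 : (m + 2) + 2 ≤ p := by
        have : ((m : ℤ) + 4) ≤ (p : ℤ) := by linarith
        exact_mod_cast this
      have h1 := ha2 (m + 2) (by omega) hm4
      have h2 := hsum (m + 1) (by omega) (by exact_mod_cast hk)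
      calc ‖a (m + 2)‖ * ‖∑ i, c i * (x i ^ (m + 1) - (l : ℚ_[p]) ^ (m + 1))‖
          ≤ (p : ℝ) ^ (-(((m : ℝ) + 2) - 1)) * (p : ℝ) ^ (-((N : ℝ) - ((m : ℝ) + 1))) := by
            apply mul_le_mul ?_ ?_ (norm_nonneg _) (Real.rpow_nonneg hp0.le _)
            · convert h1 using 3; rfl; push_cast; ring
            · convert h2 using 3; rfl; all_goals (push_cast; ring)
        _ = (p : ℝ) ^ ((-(((m : ℝ) + 2) - 1)) + (-((N : ℝ) - ((m : ℝ) + 1)))) :=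
            (hrpow_add _ _).symm
        _ ≤ (p : ℝ) ^ (-(N : ℝ)) := hmono _ _ (by linarith)
    · push_neg at hk
      have hNm : N ≤ M + (m : ℤ) + 1 := by omega
      have hNmR : (N : ℝ) ≤ (M : ℝ) + (m : ℝ) + 1 := by exact_mod_cast hNm
      by_cases h2 : ((m : ℤ) + 4) ≤ (p : ℤ)
      · -- ha2 still applicable
        have hm4 : (m + 2) + 2 ≤ p := by exact_mod_cast h2
        have h1 := ha2 (m + 2) (by omega) hm4
        calc ‖a (m + 2)‖ * ‖∑ i, c i * (x i ^ (m + 1) - (l : ℚ_[p]) ^ (m + 1))‖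
            ≤ (p : ℝ) ^ (-(((m : ℝ) + 2) - 1)) * (p : ℝ) ^ (-(M : ℝ)) := by
              apply mul_le_mul ?_ (hT _) (norm_nonneg _) (Real.rpow_nonneg hp0.le _)
              convert h1 using 3; rfl; push_cast; ring
          _ = (p : ℝ) ^ ((-(((m : ℝ) + 2) - 1)) + (-(M : ℝ))) := (hrpow_add _ _).symm
          _ ≤ (p : ℝ) ^ (-(N : ℝ)) := hmono _ _ (by linarith)
      · -- large exponent : use ha1
        push_neg at h2
        have hpm : (p : ℤ) ≤ (m : ℤ) + 3 := by omega
        have hpmR : (p : ℝ) ≤ (m : ℝ) + 3 := by exact_mod_cast hpm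
        have hexp : -((((p : ℝ) - 2) * ((m : ℝ) + 2) / ((p : ℝ) - 1)) - 2) + -(M : ℝ)
            ≤ -(N : ℝ) := by
          have hp1' : (0 : ℝ) < (p : ℝ) - 1 := by linarith
          have key : ((N : ℝ) - (M : ℝ) + 2) * ((p : ℝ) - 1)
              ≤ ((p : ℝ) - 2) * ((m : ℝ) + 2) := by
            nlinarith [mul_nonneg (show (0:ℝ) ≤ (p : ℝ) - 2 by linarith)
                (show (0:ℝ) ≤ (m : ℝ) + 3 - (p : ℝ) by linarith),
              mul_nonneg (show (0:ℝ) ≤ (p : ℝ) - 1 by linarith)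
                (show (0:ℝ) ≤ (p : ℝ) - ((N : ℝ) - (M : ℝ) + 4) by linarith)]
          have : (N : ℝ) - (M : ℝ) + 2 ≤ ((p : ℝ) - 2) * ((m : ℝ) + 2) / ((p : ℝ) - 1) :=
            (le_div_iff₀ hp1').2 key
          linarith
        calc ‖a (m + 2)‖ * ‖∑ i, c i * (x i ^ (m + 1) - (l : ℚ_[p]) ^ (m + 1))‖
            ≤ (p : ℝ) ^ (-((((p : ℝ) - 2) * ((m : ℝ) + 2) / ((p : ℝ) - 1)) - 2))
              * (p : ℝ) ^ (-(M : ℝ)) :=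
              mul_le_mul (ha1' m) (hT _) (norm_nonneg _) (Real.rpow_nonneg hp0.le _)
          _ = (p : ℝ) ^ ((-((((p : ℝ) - 2) * ((m : ℝ) + 2) / ((p : ℝ) - 1)) - 2)) + -(M : ℝ)) :=
              (hrpow_add _ _).symm
          _ ≤ (p : ℝ) ^ (-(N : ℝ)) := hmono _ _ hexp
  -- summability: geometric bound
  set r : ℝ := (p : ℝ) ^ (-(((p : ℝ) - 2) / ((p : ℝ) - 1))) with hr
  have hr0 : 0 ≤ r := Real.rpow_nonneg hp0.le _
  have hr1 : r < 1 := by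
    apply Real.rpow_lt_one_of_one_lt_of_neg hp1
    have hp1' : (0 : ℝ) < (p : ℝ) - 1 := by linarith
    have : (0 : ℝ) < ((p : ℝ) - 2) / ((p : ℝ) - 1) :=
      div_pos (by linarith) hp1'
    linarith
  set C : ℝ := (p : ℝ) ^ (-((2 * ((p : ℝ) - 2) / ((p : ℝ) - 1)) - 2 + (M : ℝ))) with hC
  have hbnd : ∀ m : ℕ, ‖f m‖ ≤ C * r ^ m := by
    intro m
    simp only [hf]
    rw [norm_mul]
    calc ‖a (m + 2)‖ * ‖∑ i, c i * (x i ^ (m + 1) - (l : ℚ_[p]) ^ (m + 1))‖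
        ≤ (p : ℝ) ^ (-((((p : ℝ) - 2) * ((m : ℝ) + 2) / ((p : ℝ) - 1)) - 2))
          * (p : ℝ) ^ (-(M : ℝ)) :=
          mul_le_mul (ha1' m) (hT _) (norm_nonneg _) (Real.rpow_nonneg hp0.le _)
      _ = C * r ^ m := by
          rw [hC, hr, ← Real.rpow_natCast ((p : ℝ) ^ (-(((p : ℝ) - 2) / ((p : ℝ) - 1)))) m,
            ← Real.rpow_mul hp0.le, ← hrpow_add, ← hrpow_add]
          congr 1
          have hp1' : ((p : ℝ) - 1) ≠ 0 := by
            intro h; rw [sub_eq_zero] at h; linarith [h ▸ hp1]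
          field_simp
          ring
  have hsummable : Summable f :=
    Summable.of_norm_bounded ((summable_geometric_of_lt_one hr0 hr1).mul_left C) hbnd
  refine ⟨∑' m, f m, hsummable.hasSum, ?_⟩
  exact IsUltrametricDist.norm_tsum_le_of_forall_le_of_nonneg
    (Real.rpow_nonneg hp0.le _) hkey
end
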